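/- Under the adaptive data-collection setup, the oracle estimator τ̂ₙ^{f*}(O_n) := (1/n) Σ_{i=1}^n { g(X_i,A_i)(Y_i − μ*(X_i,A_i)) / π*_i(X_i,O_{i-1};A_i) + ⟨g(X_i,·), μ*(X_i,·)⟩_{λ_A} } satisfies n·Var_{I*}[τ̂ₙ^{f*}(O_n)] = v*², where v*² := Var_{X~Ξ*}[⟨g(X,·),μ*(X,·)⟩_{λ_A}] + ‖σ‖_(n)². -/

import Mathlib

open MeasureTheory ProbabilityTheory
open scoped ENNReal

noncomputable section

open Function
open scoped NNReal

lemma integrable_mul_of_sq {α : Type*} [MeasurableSpace α] {μ : Measure α} {f g : α → ℝ}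
    (hf : AEStronglyMeasurable f μ) (hg : AEStronglyMeasurable g μ)
    (hf2 : Integrable (fun x => f x ^ 2) μ) (hg2 : Integrable (fun x => g x ^ 2) μ) :
    Integrable (fun x => f x * g x) μ := by
  have hb : Integrable (fun x => (f x ^ 2 + g x ^ 2) / 2) μ := (hf2.add hg2).div_const 2
  refine hb.mono' (hf.mul hg) (Filter.Eventually.of_forall fun x => ?_)
  rw [Real.norm_eq_abs, abs_mul]
  nlinarith [sq_nonneg (|f x| - |g x|), sq_abs (f x), sq_abs (g x), abs_nonneg (f x),
    abs_nonneg (g x)]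

namespace OracleVar


structure Setup (X A : Type*) [MeasurableSpace X] [MeasurableSpace A] (n : ℕ) where
  lamX : Measure X
  lamA : Measure A
  lamY : Measure ℝ
  sfX : SigmaFinite lamX
  sfA : SigmaFinite lamA
  sfY : SigmaFinite lamY
  xi : X → ℝ
  hxi_meas : Measurable xi
  hxi_nonneg : ∀ x, 0 ≤ xi x
  hxi_norm : ∫ x, xi x ∂lamX = 1
  pi : Fin n → X → (Fin n → X × A × ℝ) → A → ℝ
  hpi_meas : ∀ i, Measurable fun p : X × (Fin n → X × A × ℝ) × A => pi i p.1 p.2.1 p.2.2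
  hpi_pos : ∀ i x o a, 0 < pi i x o a
  hpi_hist : ∀ (i : Fin n) x o o' a, (∀ j : Fin n, (j : ℕ) < (i : ℕ) → o j = o' j) →
      pi i x o a = pi i x o' a
  hpi_norm : ∀ i x o, ∫ a, pi i x o a ∂lamA = 1
  gam : X → A → ℝ → ℝ
  hgam_meas : Measurable fun p : (X × A) × ℝ => gam p.1.1 p.1.2 p.2
  hgam_nonneg : ∀ x a y, 0 ≤ gam x a y
  hgam_norm : ∀ x a, ∫ y, gam x a y ∂lamY = 1
  g : X → A → ℝ
  hg_meas : Measurable fun p : X × A => g p.1 p.2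
  mustar : X → A → ℝ
  hmu : ∀ x a, mustar x a = ∫ y, y * gam x a y ∂lamY
  sig2 : X → A → ℝ
  hsig2 : ∀ x a, sig2 x a = ∫ y, (y - mustar x a) ^ 2 * gam x a y ∂lamY

variable {X A : Type*} [MeasurableSpace X] [MeasurableSpace A] {n : ℕ}

instance (S : Setup X A n) : SigmaFinite S.lamX := S.sfX
instance (S : Setup X A n) : SigmaFinite S.lamA := S.sfA
instance (S : Setup X A n) : SigmaFinite S.lamY := S.sfY

namespace Setup

variable (S : Setup X A n)

/-- base measure on one observation -/
def nu : Measure (X × A × ℝ) := S.lamX.prod (S.lamA.prod S.lamY)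

instance : SigmaFinite S.nu := by unfold nu; infer_instance

/-- policy-density of observation `u` at stage `k` given history `o` -/
def den (k : Fin n) (o : Fin n → X × A × ℝ) (u : X × A × ℝ) : ℝ :=
  S.xi u.1 * (S.pi k u.1 o u.2.1 * S.gam u.1 u.2.1 u.2.2)

def d (j : Fin n) (o : Fin n → X × A × ℝ) : ℝ := S.den j o (o j)

def W (s : Finset (Fin n)) (o : Fin n → X × A × ℝ) : ℝ≥0∞ :=
  ∏ j ∈ s, ENNReal.ofReal (S.d j o)

/-- the trajectory law -/
def P : Measure (Fin n → X × A × ℝ) :=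
  (Measure.pi fun _ : Fin n => S.nu).withDensity (S.W Finset.univ)

lemma den_nonneg (k : Fin n) (o : Fin n → X × A × ℝ) (u : X × A × ℝ) : 0 ≤ S.den k o u :=
  mul_nonneg (S.hxi_nonneg _) (mul_nonneg (S.hpi_pos k _ _ _).le (S.hgam_nonneg _ _ _))


lemma gam_slice (x : X) (a : A) : Measurable fun y : ℝ => S.gam x a y :=
  S.hgam_meas.comp' (@measurable_prodMk_left (X × A) ℝ _ _ (x, a))

lemma pi_slice (k : Fin n) (x : X) (o : Fin n → X × A × ℝ) :
    Measurable fun a : A => S.pi k x o a :=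
  (S.hpi_meas k).comp' ((@measurable_prodMk_left X ((Fin n → X × A × ℝ) × A) _ _ x).comp'
    (@measurable_prodMk_left (Fin n → X × A × ℝ) A _ _ o))

lemma den_meas (k : Fin n) :
    Measurable fun p : (Fin n → X × A × ℝ) × (X × A × ℝ) => S.den k p.1 p.2 := by
  apply Measurable.mul
  · exact S.hxi_meas.comp (measurable_snd.fst)
  · apply Measurable.mul
    · exact (S.hpi_meas k).comp
        ((measurable_snd.fst).prodMk (measurable_fst.prodMk measurable_snd.snd.fst))
    · exact S.hgam_meas.comp
        ((measurable_snd.fst.prodMk measurable_snd.snd.fst).prodMk measurable_snd.snd.snd)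

lemma den_meas_slice (k : Fin n) (o : Fin n → X × A × ℝ) : Measurable (S.den k o) :=
  (S.den_meas k).comp (measurable_const.prodMk measurable_id)

lemma d_meas (j : Fin n) : Measurable (S.d j) :=
  (S.den_meas j).comp (measurable_id.prodMk (measurable_pi_apply j))

lemma d_nonneg (j : Fin n) (o : Fin n → X × A × ℝ) : 0 ≤ S.d j o := S.den_nonneg _ _ _

lemma W_meas (s : Finset (Fin n)) : Measurable (S.W s) :=
  Finset.measurable_prod _ fun j _ => (ENNReal.measurable_ofReal).comp (S.d_meas j)

lemma gam_int (x : X) (a : A) : Integrable (S.gam x a) S.lamY :=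
  integrable_of_integral_eq_one (S.hgam_norm x a)

lemma pi_int (k : Fin n) (x : X) (o : Fin n → X × A × ℝ) :
    Integrable (fun a => S.pi k x o a) S.lamA :=
  integrable_of_integral_eq_one (S.hpi_norm k x o)

lemma xi_int : Integrable S.xi S.lamX := integrable_of_integral_eq_one S.hxi_norm

lemma lint_gam (x : X) (a : A) : ∫⁻ y, ENNReal.ofReal (S.gam x a y) ∂S.lamY = 1 := by
  rw [← ofReal_integral_eq_lintegral_ofReal (S.gam_int x a)
    (Filter.Eventually.of_forall fun y => S.hgam_nonneg x a y), S.hgam_norm, ENNReal.ofReal_one]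

lemma lint_pi (k : Fin n) (x : X) (o : Fin n → X × A × ℝ) :
    ∫⁻ a, ENNReal.ofReal (S.pi k x o a) ∂S.lamA = 1 := by
  rw [← ofReal_integral_eq_lintegral_ofReal (S.pi_int k x o)
    (Filter.Eventually.of_forall fun a => (S.hpi_pos k x o a).le), S.hpi_norm, ENNReal.ofReal_one]

lemma lint_xi : ∫⁻ x, ENNReal.ofReal (S.xi x) ∂S.lamX = 1 := by
  rw [← ofReal_integral_eq_lintegral_ofReal S.xi_int
    (Filter.Eventually.of_forall S.hxi_nonneg), S.hxi_norm, ENNReal.ofReal_one]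

/-- normalization of the one-step density -/
lemma lint_den (k : Fin n) (o : Fin n → X × A × ℝ) :
    ∫⁻ u, ENNReal.ofReal (S.den k o u) ∂S.nu = 1 := by
  have hmeas : Measurable fun u => ENNReal.ofReal (S.den k o u) :=
    (S.den_meas_slice k o).ennreal_ofReal
  rw [nu, lintegral_prod _ hmeas.aemeasurable]
  have : ∀ x : X, (∫⁻ u : A × ℝ, ENNReal.ofReal (S.den k o (x, u)) ∂(S.lamA.prod S.lamY))
      = ENNReal.ofReal (S.xi x) := by
    intro x
    have hm2 : Measurable fun u : A × ℝ => ENNReal.ofReal (S.den k o (x, u)) :=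
      ((S.den_meas_slice k o).comp' (@measurable_prodMk_left X (A × ℝ) _ _ x)).ennreal_ofReal
    rw [lintegral_prod _ hm2.aemeasurable]
    have : ∀ a : A, (∫⁻ y, ENNReal.ofReal (S.den k o (x, a, y)) ∂S.lamY)
        = ENNReal.ofReal (S.xi x) * ENNReal.ofReal (S.pi k x o a) := by
      intro a
      simp only [den]
      have hg1 : Measurable fun y : ℝ => ENNReal.ofReal (S.gam x a y) :=
        (S.gam_slice x a).ennreal_ofReal
      have hg2 : Measurable fun y : ℝ => ENNReal.ofReal (S.pi k x o a) * ENNReal.ofReal (S.gam x a y) :=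
        hg1.const_mul _
      calc ∫⁻ y, ENNReal.ofReal (S.xi x * (S.pi k x o a * S.gam x a y)) ∂S.lamY
          = ∫⁻ y, ENNReal.ofReal (S.xi x) * (ENNReal.ofReal (S.pi k x o a) *
              ENNReal.ofReal (S.gam x a y)) ∂S.lamY := by
            congr 1; funext y
            rw [ENNReal.ofReal_mul (S.hxi_nonneg x), ENNReal.ofReal_mul (S.hpi_pos k x o a).le]
        _ = ENNReal.ofReal (S.xi x) * (ENNReal.ofReal (S.pi k x o a) *
              ∫⁻ y, ENNReal.ofReal (S.gam x a y) ∂S.lamY) := by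
            rw [lintegral_const_mul _ hg2, lintegral_const_mul _ hg1]
        _ = ENNReal.ofReal (S.xi x) * ENNReal.ofReal (S.pi k x o a) := by
            rw [S.lint_gam x a, mul_one]
    simp only [this]
    have hp1 : Measurable fun a : A => ENNReal.ofReal (S.pi k x o a) :=
      (S.pi_slice k x o).ennreal_ofReal
    rw [lintegral_const_mul _ hp1, S.lint_pi k x o, mul_one]
  simp only [this]
  rw [← S.lint_xi]


section Peel

/-- dependence of the one-step density on history -/
lemma den_dep (k : Fin n) {o o' : Fin n → X × A × ℝ}
    (h : ∀ j : Fin n, (j : ℕ) < (k : ℕ) → o j = o' j) (u : X × A × ℝ) :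
    S.den k o u = S.den k o' u := by
  unfold den; rw [S.hpi_hist k u.1 o o' u.2.1 h]

lemma d_dep (j : Fin n) {o o' : Fin n → X × A × ℝ}
    (h : ∀ m : Fin n, (m : ℕ) ≤ (j : ℕ) → o m = o' m) :
    S.d j o = S.d j o' := by
  unfold d
  rw [h j le_rfl, S.den_dep j (fun m hm => h m hm.le)]

lemma peel : ∀ (m k : ℕ), m + k = n → ∀ (F : (Fin n → X × A × ℝ) → ℝ≥0∞), Measurable F →
    (∀ o o', (∀ j : Fin n, (j : ℕ) < k → o j = o' j) → F o = F o') →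
    (∫⋯∫⁻_(Finset.univ.filter fun j : Fin n => k ≤ (j : ℕ)),
        (fun o => F o * S.W Finset.univ o) ∂(fun _ => S.nu))
    = fun o => F o * S.W (Finset.univ.filter fun j : Fin n => (j : ℕ) < k) o := by
  intro m
  induction m with
  | zero =>
    intro k hk F hF hdep
    have h1 : (Finset.univ.filter fun j : Fin n => k ≤ (j : ℕ)) = ∅ :=
      Finset.filter_eq_empty_iff.2 fun j _ => by have := j.isLt; omega
    have h2 : (Finset.univ.filter fun j : Fin n => (j : ℕ) < k) = Finset.univ :=
      Finset.filter_true_of_mem fun j _ => by have := j.isLt; omega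
    rw [h1, h2, lmarginal_empty]
  | succ m ih =>
    intro k hk F hF hdep
    have hkn : k < n := by omega
    set κ : Fin n := ⟨k, hkn⟩ with hκ
    have hκval : (κ : ℕ) = k := rfl
    have hFW : Measurable fun o => F o * S.W Finset.univ o := hF.mul (S.W_meas _)
    have hsplit : (Finset.univ.filter fun j : Fin n => k ≤ (j : ℕ))
        = {κ} ∪ (Finset.univ.filter fun j : Fin n => k + 1 ≤ (j : ℕ)) := by
      ext j
      simp only [Finset.mem_filter, Finset.mem_union, Finset.mem_singleton, Finset.mem_univ,
        true_and]
      constructor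
      · intro hj
        rcases eq_or_lt_of_le hj with h | h
        · left; exact Fin.ext (by omega)
        · right; omega
      · rintro (rfl | hj)
        · omega
        · omega
    have hdisj : Disjoint ({κ} : Finset (Fin n))
        (Finset.univ.filter fun j : Fin n => k + 1 ≤ (j : ℕ)) := by
      simp only [Finset.disjoint_singleton_left, Finset.mem_filter, Finset.mem_univ, true_and,
        not_le, hκval]
      omega
    rw [hsplit, lmarginal_union _ _ hFW hdisj,
      ih (k + 1) (by omega) F hF (fun o o' h => hdep o o' fun j hj => h j (by omega))]
    funext o
    rw [lmarginal_singleton]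
    have hWsplit : (Finset.univ.filter fun j : Fin n => (j : ℕ) < k + 1)
        = insert κ (Finset.univ.filter fun j : Fin n => (j : ℕ) < k) := by
      ext j
      simp only [Finset.mem_filter, Finset.mem_insert, Finset.mem_univ, true_and]
      constructor
      · intro hj
        by_cases h : (j : ℕ) = k
        · left; exact Fin.ext (by omega)
        · right; omega
      · rintro (rfl | hj)
        · omega
        · omega
    have key : ∀ u : X × A × ℝ,
        F (Function.update o κ u) * S.W (Finset.univ.filter fun j : Fin n => (j : ℕ) < k + 1)
          (Function.update o κ u)
        = (F o * S.W (Finset.univ.filter fun j : Fin n => (j : ℕ) < k) o)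
            * ENNReal.ofReal (S.den κ o u) := by
      intro u
      have hupd : ∀ j : Fin n, (j : ℕ) < k → Function.update o κ u j = o j := by
        intro j hj
        apply Function.update_of_ne
        intro h
        rw [h, hκval] at hj
        omega
      have hF' : F (Function.update o κ u) = F o := hdep _ _ hupd
      have hd : ∀ j ∈ Finset.univ.filter fun j : Fin n => (j : ℕ) < k,
          ENNReal.ofReal (S.d j (Function.update o κ u)) = ENNReal.ofReal (S.d j o) := by
        intro j hj
        simp only [Finset.mem_filter] at hj
        congr 1
        exact S.d_dep j fun m hm => hupd m (by omega)
      have hdκ : S.d κ (Function.update o κ u) = S.den κ o u := by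
        unfold d
        rw [Function.update_self]
        exact S.den_dep κ (fun m hm => hupd m (by rw [hκval] at hm; exact hm)) u
      have hnotmem : κ ∉ Finset.univ.filter fun j : Fin n => (j : ℕ) < k := by
        simp only [Finset.mem_filter, Finset.mem_univ, true_and, hκval, not_lt]
        exact le_rfl
      rw [hF', hWsplit, W, Finset.prod_insert hnotmem, hdκ]
      have hrest : (∏ j ∈ Finset.univ.filter fun j : Fin n => (j : ℕ) < k,
          ENNReal.ofReal (S.d j (Function.update o κ u)))
          = S.W (Finset.univ.filter fun j : Fin n => (j : ℕ) < k) o :=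
        Finset.prod_congr rfl hd
      rw [hrest]
      ring
    simp only [key]
    rw [lintegral_const_mul _ (S.den_meas_slice κ o).ennreal_ofReal, S.lint_den κ o, mul_one]

lemma lintegral_P (k : ℕ) (hk : k ≤ n) (F : (Fin n → X × A × ℝ) → ℝ≥0∞) (hF : Measurable F)
    (hdep : ∀ o o', (∀ j : Fin n, (j : ℕ) < k → o j = o' j) → F o = F o')
    (ω₀ : Fin n → X × A × ℝ) :
    ∫⁻ o, F o ∂S.P
      = (∫⋯∫⁻_(Finset.univ.filter fun j : Fin n => (j : ℕ) < k),
          (fun o => F o * S.W (Finset.univ.filter fun j : Fin n => (j : ℕ) < k) o)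
          ∂(fun _ => S.nu)) ω₀ := by
  rw [P, lintegral_withDensity_eq_lintegral_mul _ (S.W_meas _) hF]
  have h1 : ∫⁻ o, (S.W Finset.univ * F) o ∂(Measure.pi fun _ : Fin n => S.nu)
      = ∫⁻ o, F o * S.W Finset.univ o ∂(Measure.pi fun _ : Fin n => S.nu) :=
    lintegral_congr fun o => mul_comm _ _
  rw [h1, lintegral_eq_lmarginal_univ ω₀]
  have hU : (Finset.univ : Finset (Fin n))
      = (Finset.univ.filter fun j : Fin n => (j : ℕ) < k)
        ∪ (Finset.univ.filter fun j : Fin n => k ≤ (j : ℕ)) := by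
    ext j
    simp only [Finset.mem_univ, Finset.mem_union, Finset.mem_filter, true_and, true_iff]
    omega
  have hdisj : Disjoint (Finset.univ.filter fun j : Fin n => (j : ℕ) < k)
      (Finset.univ.filter fun j : Fin n => k ≤ (j : ℕ)) := by
    rw [Finset.disjoint_filter]
    intro j _ h
    omega
  have hun := lmarginal_union (fun _ : Fin n => S.nu)
    (fun o => F o * S.W Finset.univ o) (hF.mul (S.W_meas _)) hdisj
  rw [← hU] at hun
  rw [hun, S.peel (n - k) k (by omega) F hF hdep]

variable [Nonempty X] [Nonempty A]

lemma P_prob : IsProbabilityMeasure S.P := by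
  constructor
  rw [← lintegral_one]
  haveI : Nonempty (Fin n → X × A × ℝ) := ⟨fun _ => (Classical.arbitrary X, Classical.arbitrary A, 0)⟩
  rw [S.lintegral_P 0 (Nat.zero_le n) (fun _ => 1) measurable_const (fun _ _ _ => rfl) (Classical.arbitrary _)]
  have h0 : (Finset.univ.filter fun j : Fin n => (j : ℕ) < 0) = ∅ := by
    apply Finset.filter_eq_empty_iff.2
    intro j _
    omega
  rw [h0, lmarginal_empty]
  simp [W]

end Peel

section KernelDef

/-- the one-step kernel -/
def Kk (k : Fin n) : Kernel (Fin n → X × A × ℝ) (X × A × ℝ) :=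
  Kernel.withDensity (Kernel.const _ S.nu) fun o u => ENNReal.ofReal (S.den k o u)

lemma Kk_apply (k : Fin n) (o : Fin n → X × A × ℝ) :
    S.Kk k o = S.nu.withDensity fun u => ENNReal.ofReal (S.den k o u) := by
  rw [Kk, Kernel.withDensity_apply, Kernel.const_apply]
  exact (S.den_meas k).ennreal_ofReal

instance (k : Fin n) : IsMarkovKernel (S.Kk k) := by
  constructor
  intro o
  rw [S.Kk_apply k o]
  constructor
  rw [withDensity_apply _ MeasurableSet.univ, setLIntegral_univ]
  exact S.lint_den k o

end KernelDef


section Struct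

/-- freeze coordinates `≥ k` at the reference point `ω₀` -/
def Rmap (k : ℕ) (ω₀ : Fin n → X × A × ℝ) (o : Fin n → X × A × ℝ) : Fin n → X × A × ℝ :=
  fun j => if (j : ℕ) < k then o j else ω₀ j

lemma Rmap_meas (k : ℕ) (ω₀ : Fin n → X × A × ℝ) : Measurable (Rmap k ω₀) := by
  apply measurable_pi_lambda
  intro j
  by_cases h : (j : ℕ) < k
  · simpa [Rmap, h] using measurable_pi_apply j
  · simpa [Rmap, h] using measurable_const

lemma Rmap_lt (k : ℕ) (ω₀ o : Fin n → X × A × ℝ) (j : Fin n) (hj : (j : ℕ) < k) :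
    Rmap k ω₀ o j = o j := if_pos hj

/-- the law of the first `k` coordinates (with the rest frozen at `ω₀`) -/
def Q (ω₀ : Fin n → X × A × ℝ) (k : ℕ) : Measure (Fin n → X × A × ℝ) :=
  S.P.map (Rmap k ω₀)

lemma lintegral_Q (ω₀ : Fin n → X × A × ℝ) (k : ℕ) (F : (Fin n → X × A × ℝ) → ℝ≥0∞)
    (hF : Measurable F)
    (hdep : ∀ o o', (∀ j : Fin n, (j : ℕ) < k → o j = o' j) → F o = F o') :
    ∫⁻ o, F o ∂(S.Q ω₀ k) = ∫⁻ o, F o ∂S.P := by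
  rw [Q, lintegral_map hF (Rmap_meas k ω₀)]
  exact lintegral_congr fun o => hdep _ _ fun j hj => Rmap_lt k ω₀ o j hj

lemma integral_Q (ω₀ : Fin n → X × A × ℝ) (k : ℕ) (F : (Fin n → X × A × ℝ) → ℝ)
    (hF : Measurable F)
    (hdep : ∀ o o', (∀ j : Fin n, (j : ℕ) < k → o j = o' j) → F o = F o') :
    ∫ o, F o ∂(S.Q ω₀ k) = ∫ o, F o ∂S.P := by
  rw [Q, integral_map (Rmap_meas k ω₀).aemeasurable hF.aestronglyMeasurable]
  exact integral_congr_ae (Filter.Eventually.of_forall fun o =>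
    hdep _ _ fun j hj => Rmap_lt k ω₀ o j hj)

lemma integrable_Q (ω₀ : Fin n → X × A × ℝ) (k : ℕ) (F : (Fin n → X × A × ℝ) → ℝ)
    (hF : Measurable F)
    (hdep : ∀ o o', (∀ j : Fin n, (j : ℕ) < k → o j = o' j) → F o = F o')
    (hint : Integrable F S.P) : Integrable F (S.Q ω₀ k) := by
  rw [Q, integrable_map_measure hF.aestronglyMeasurable (Rmap_meas k ω₀).aemeasurable]
  have h : F ∘ Rmap k ω₀ = F :=
    funext fun o => hdep _ _ fun j hj => Rmap_lt k ω₀ o j hj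
  rwa [h]

lemma Wsucc_update (k : Fin n) (o : Fin n → X × A × ℝ) (u : X × A × ℝ) :
    S.W (Finset.univ.filter fun j : Fin n => (j : ℕ) < (k : ℕ) + 1) (Function.update o k u)
      = S.W (Finset.univ.filter fun j : Fin n => (j : ℕ) < (k : ℕ)) o
        * ENNReal.ofReal (S.den k o u) := by
  have hupd : ∀ j : Fin n, (j : ℕ) < (k : ℕ) → Function.update o k u j = o j := by
    intro j hj
    apply Function.update_of_ne
    intro h
    rw [h] at hj
    omega
  have hWsplit : (Finset.univ.filter fun j : Fin n => (j : ℕ) < (k : ℕ) + 1)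
      = insert k (Finset.univ.filter fun j : Fin n => (j : ℕ) < (k : ℕ)) := by
    ext j
    simp only [Finset.mem_filter, Finset.mem_insert, Finset.mem_univ, true_and]
    constructor
    · intro hj
      by_cases h : (j : ℕ) = (k : ℕ)
      · left; exact Fin.ext h
      · right; omega
    · rintro (rfl | hj)
      · omega
      · omega
  have hnotmem : k ∉ Finset.univ.filter fun j : Fin n => (j : ℕ) < (k : ℕ) := by
    simp only [Finset.mem_filter, Finset.mem_univ, true_and, not_lt]
    exact le_rfl
  have hdκ : S.d k (Function.update o k u) = S.den k o u := by
    unfold d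
    rw [Function.update_self]
    exact S.den_dep k (fun m hm => hupd m hm) u
  rw [hWsplit, W, Finset.prod_insert hnotmem, hdκ]
  have hrest : (∏ j ∈ Finset.univ.filter fun j : Fin n => (j : ℕ) < (k : ℕ),
      ENNReal.ofReal (S.d j (Function.update o k u)))
      = S.W (Finset.univ.filter fun j : Fin n => (j : ℕ) < (k : ℕ)) o :=
    Finset.prod_congr rfl fun j hj => by
      simp only [Finset.mem_filter] at hj
      congr 1
      exact S.d_dep j fun m hm => hupd m (by omega)
  rw [hrest]
  ring

variable [Nonempty X] [Nonempty A]

instance (ω₀ : Fin n → X × A × ℝ) (k : ℕ) : IsProbabilityMeasure (S.Q ω₀ k) := by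
  haveI := S.P_prob
  exact Measure.isProbabilityMeasure_map (Rmap_meas k ω₀).aemeasurable

/-- the key structural identity -/
theorem Q_succ (ω₀ : Fin n → X × A × ℝ) (k : Fin n) :
    S.Q ω₀ ((k : ℕ) + 1)
      = ((S.Q ω₀ (k : ℕ)) ⊗ₘ S.Kk k).map
          (fun p : (Fin n → X × A × ℝ) × (X × A × ℝ) => Function.update p.1 k p.2) := by
  have φmeas : Measurable
      (fun p : (Fin n → X × A × ℝ) × (X × A × ℝ) => Function.update p.1 k p.2) :=
    measurable_update'
  ext s hs
  -- LHS
  have hlhs : S.Q ω₀ ((k : ℕ) + 1) s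
      = ∫⁻ o, s.indicator (fun _ => (1 : ℝ≥0∞)) (Rmap ((k : ℕ) + 1) ω₀ o) ∂S.P := by
    rw [Q, Measure.map_apply (Rmap_meas _ ω₀) hs]
    rw [← lintegral_indicator_one ((Rmap_meas _ ω₀) hs)]
    apply lintegral_congr
    intro o
    by_cases h : Rmap ((k : ℕ) + 1) ω₀ o ∈ s
    · simp [h, Set.indicator_of_mem]
    · simp [h, Set.indicator_of_notMem]
  -- RHS
  set G : (Fin n → X × A × ℝ) → ℝ≥0∞ :=
    fun o => S.Kk k (Rmap (k : ℕ) ω₀ o)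
      {u | Function.update (Rmap (k : ℕ) ω₀ o) k u ∈ s} with hG
  have hG0meas : Measurable fun o => S.Kk k o
      (Prod.mk o ⁻¹' ((fun p : (Fin n → X × A × ℝ) × (X × A × ℝ) =>
        Function.update p.1 k p.2) ⁻¹' s)) :=
    Kernel.measurable_kernel_prodMk_left (φmeas hs)
  have hGmeas : Measurable G := hG0meas.comp (Rmap_meas _ ω₀)
  have hrhs : (((S.Q ω₀ (k : ℕ)) ⊗ₘ S.Kk k).map
      (fun p : (Fin n → X × A × ℝ) × (X × A × ℝ) => Function.update p.1 k p.2)) s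
      = ∫⁻ o, G o ∂S.P := by
    rw [Measure.map_apply φmeas hs, Measure.compProd_apply (φmeas hs), Q,
      lintegral_map hG0meas (Rmap_meas _ ω₀)]
    rfl
  rw [hlhs, hrhs]
  -- both sides via lintegral_P
  have hdep1 : ∀ o o', (∀ j : Fin n, (j : ℕ) < (k : ℕ) + 1 → o j = o' j) →
      s.indicator (fun _ => (1 : ℝ≥0∞)) (Rmap ((k : ℕ) + 1) ω₀ o)
        = s.indicator (fun _ => (1 : ℝ≥0∞)) (Rmap ((k : ℕ) + 1) ω₀ o') := by
    intro o o' h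
    have : Rmap ((k : ℕ) + 1) ω₀ o = Rmap ((k : ℕ) + 1) ω₀ o' := by
      funext j
      unfold Rmap
      by_cases hj : (j : ℕ) < (k : ℕ) + 1
      · rw [if_pos hj, if_pos hj, h j hj]
      · rw [if_neg hj, if_neg hj]
    rw [this]
  have hdepG : ∀ o o', (∀ j : Fin n, (j : ℕ) < (k : ℕ) → o j = o' j) → G o = G o' := by
    intro o o' h
    have : Rmap (k : ℕ) ω₀ o = Rmap (k : ℕ) ω₀ o' := by
      funext j
      unfold Rmap
      by_cases hj : (j : ℕ) < (k : ℕ)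
      · rw [if_pos hj, if_pos hj, h j hj]
      · rw [if_neg hj, if_neg hj]
    simp only [hG]
    rw [this]
  have hmeas1 : Measurable fun o =>
      s.indicator (fun _ => (1 : ℝ≥0∞)) (Rmap ((k : ℕ) + 1) ω₀ o) :=
    (measurable_const.indicator hs).comp (Rmap_meas _ ω₀)
  rw [S.lintegral_P ((k : ℕ) + 1) k.isLt _ hmeas1 hdep1 ω₀,
    S.lintegral_P (k : ℕ) (le_of_lt k.isLt) G hGmeas hdepG ω₀]
  have hU2 : (Finset.univ.filter fun j : Fin n => (j : ℕ) < (k : ℕ) + 1)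
      = (Finset.univ.filter fun j : Fin n => (j : ℕ) < (k : ℕ)) ∪ {k} := by
    ext j
    simp only [Finset.mem_filter, Finset.mem_union, Finset.mem_singleton, Finset.mem_univ,
      true_and]
    constructor
    · intro hj
      by_cases h : (j : ℕ) = (k : ℕ)
      · right; exact Fin.ext h
      · left; omega
    · rintro (hj | rfl)
      · omega
      · omega
  have hdisj2 : Disjoint (Finset.univ.filter fun j : Fin n => (j : ℕ) < (k : ℕ))
      ({k} : Finset (Fin n)) := by
    simp only [Finset.disjoint_singleton_right, Finset.mem_filter, Finset.mem_univ, true_and,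
      not_lt]
    exact le_rfl
  have hun := lmarginal_union (fun _ : Fin n => S.nu)
    (fun o => s.indicator (fun _ => (1 : ℝ≥0∞)) (Rmap ((k : ℕ) + 1) ω₀ o)
      * S.W (Finset.univ.filter fun j : Fin n => (j : ℕ) < (k : ℕ) + 1) o)
    (hmeas1.mul (S.W_meas _)) hdisj2
  rw [← hU2] at hun
  rw [hun]
  have hsing : (∫⋯∫⁻_({k} : Finset (Fin n)),
      (fun o => s.indicator (fun _ => (1 : ℝ≥0∞)) (Rmap ((k : ℕ) + 1) ω₀ o)
        * S.W (Finset.univ.filter fun j : Fin n => (j : ℕ) < (k : ℕ) + 1) o)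
      ∂(fun _ => S.nu))
      = fun o => G o * S.W (Finset.univ.filter fun j : Fin n => (j : ℕ) < (k : ℕ)) o := by
    funext o
    rw [lmarginal_singleton]
    have hRupd : ∀ u : X × A × ℝ, Rmap ((k : ℕ) + 1) ω₀ (Function.update o k u)
        = Function.update (Rmap (k : ℕ) ω₀ o) k u := by
      intro u
      funext j
      rcases eq_or_ne j k with rfl | hj
      · rw [Function.update_self]
        show (if (j : ℕ) < (j : ℕ) + 1 then Function.update o j u j else ω₀ j) = u
        rw [if_pos (by omega), Function.update_self]
      · rw [Function.update_of_ne hj]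
        have hval : (j : ℕ) ≠ (k : ℕ) := fun h => hj (Fin.ext h)
        show (if (j : ℕ) < (k : ℕ) + 1 then Function.update o k u j else ω₀ j)
          = (if (j : ℕ) < (k : ℕ) then o j else ω₀ j)
        rw [Function.update_of_ne hj]
        by_cases hjk : (j : ℕ) < (k : ℕ)
        · rw [if_pos (by omega), if_pos hjk]
        · rw [if_neg (by omega), if_neg hjk]
    have hset : MeasurableSet {u : X × A × ℝ | Function.update (Rmap (k : ℕ) ω₀ o) k u ∈ s} :=
      (measurable_update (Rmap (k : ℕ) ω₀ o) (a := k)) hs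
    have hGval : G o = ∫⁻ u, ({u : X × A × ℝ | Function.update (Rmap (k : ℕ) ω₀ o) k u ∈ s}).indicator
        (fun u => ENNReal.ofReal (S.den k o u)) u ∂S.nu := by
      simp only [hG]
      rw [S.Kk_apply, withDensity_apply _ hset, ← lintegral_indicator hset]
      congr 1
      funext u
      by_cases hu : u ∈ {u : X × A × ℝ | Function.update (Rmap (k : ℕ) ω₀ o) k u ∈ s}
      · rw [Set.indicator_of_mem hu, Set.indicator_of_mem hu]
        congr 1
        exact S.den_dep k (fun j hj => Rmap_lt (k : ℕ) ω₀ o j hj) u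
      · rw [Set.indicator_of_notMem hu, Set.indicator_of_notMem hu]
    calc ∫⁻ u, s.indicator (fun _ => (1 : ℝ≥0∞)) (Rmap ((k : ℕ) + 1) ω₀ (Function.update o k u))
          * S.W (Finset.univ.filter fun j : Fin n => (j : ℕ) < (k : ℕ) + 1)
              (Function.update o k u) ∂S.nu
        = ∫⁻ u, (S.W (Finset.univ.filter fun j : Fin n => (j : ℕ) < (k : ℕ)) o)
            * ({u : X × A × ℝ | Function.update (Rmap (k : ℕ) ω₀ o) k u ∈ s}).indicator
              (fun u => ENNReal.ofReal (S.den k o u)) u ∂S.nu := by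
          apply lintegral_congr
          intro u
          rw [hRupd u, S.Wsucc_update k o u]
          by_cases hu : Function.update (Rmap (k : ℕ) ω₀ o) k u ∈ s
          · have hu' : u ∈ {u : X × A × ℝ | Function.update (Rmap (k : ℕ) ω₀ o) k u ∈ s} := hu
            rw [Set.indicator_of_mem hu, Set.indicator_of_mem hu']
            ring
          · have hu' : u ∉ {u : X × A × ℝ | Function.update (Rmap (k : ℕ) ω₀ o) k u ∈ s} := hu
            rw [Set.indicator_of_notMem hu, Set.indicator_of_notMem hu']
            ring
      _ = (S.W (Finset.univ.filter fun j : Fin n => (j : ℕ) < (k : ℕ)) o)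
            * ∫⁻ u, ({u : X × A × ℝ | Function.update (Rmap (k : ℕ) ω₀ o) k u ∈ s}).indicator
              (fun u => ENNReal.ofReal (S.den k o u)) u ∂S.nu := by
          rw [lintegral_const_mul _ ((S.den_meas_slice k o).ennreal_ofReal.indicator hset)]
      _ = G o * S.W (Finset.univ.filter fun j : Fin n => (j : ℕ) < (k : ℕ)) o := by
          rw [hGval]; ring
  rw [hsing]

end Struct


section Eval

variable [Nonempty X] [Nonempty A]

lemma lintegral_eval (ω₀ : Fin n → X × A × ℝ) (k : Fin n) (F : (Fin n → X × A × ℝ) → ℝ≥0∞)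
    (hF : Measurable F)
    (hdep : ∀ o o', (∀ j : Fin n, (j : ℕ) < (k : ℕ) + 1 → o j = o' j) → F o = F o') :
    ∫⁻ o, F o ∂S.P
      = ∫⁻ o, ∫⁻ u, F (Function.update o k u) ∂(S.Kk k o) ∂(S.Q ω₀ (k : ℕ)) := by
  rw [← S.lintegral_Q ω₀ ((k : ℕ) + 1) F hF hdep, S.Q_succ ω₀ k,
    lintegral_map hF measurable_update',
    Measure.lintegral_compProd (hF.comp' measurable_update')]

lemma integrable_eval (ω₀ : Fin n → X × A × ℝ) (k : Fin n) (F : (Fin n → X × A × ℝ) → ℝ)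
    (hF : Measurable F)
    (hdep : ∀ o o', (∀ j : Fin n, (j : ℕ) < (k : ℕ) + 1 → o j = o' j) → F o = F o')
    (hint : Integrable F S.P) :
    Integrable (fun p : (Fin n → X × A × ℝ) × (X × A × ℝ) => F (Function.update p.1 k p.2))
      ((S.Q ω₀ (k : ℕ)) ⊗ₘ S.Kk k) := by
  have h1 : Integrable F (S.Q ω₀ ((k : ℕ) + 1)) := S.integrable_Q ω₀ _ F hF hdep hint
  rw [S.Q_succ ω₀ k,
    integrable_map_measure hF.aestronglyMeasurable measurable_update'.aemeasurable] at h1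
  exact h1

lemma ae_integrable_eval (ω₀ : Fin n → X × A × ℝ) (k : Fin n) (F : (Fin n → X × A × ℝ) → ℝ)
    (hF : Measurable F)
    (hdep : ∀ o o', (∀ j : Fin n, (j : ℕ) < (k : ℕ) + 1 → o j = o' j) → F o = F o')
    (hint : Integrable F S.P) :
    ∀ᵐ o ∂(S.Q ω₀ (k : ℕ)), Integrable (fun u => F (Function.update o k u)) (S.Kk k o) := by
  have h2 := S.integrable_eval ω₀ k F hF hdep hint
  exact ((Measure.integrable_compProd_iff
    ((hF.comp measurable_update').aestronglyMeasurable)).1 h2).1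

lemma integral_eval (ω₀ : Fin n → X × A × ℝ) (k : Fin n) (F : (Fin n → X × A × ℝ) → ℝ)
    (hF : Measurable F)
    (hdep : ∀ o o', (∀ j : Fin n, (j : ℕ) < (k : ℕ) + 1 → o j = o' j) → F o = F o')
    (hint : Integrable F S.P) :
    ∫ o, F o ∂S.P
      = ∫ o, ∫ u, F (Function.update o k u) ∂(S.Kk k o) ∂(S.Q ω₀ (k : ℕ)) := by
  rw [← S.integral_Q ω₀ ((k : ℕ) + 1) F hF hdep, S.Q_succ ω₀ k,
    integral_map measurable_update'.aemeasurable hF.aestronglyMeasurable,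
    Measure.integral_compProd (S.integrable_eval ω₀ k F hF hdep hint)]

end Eval

section KernelInt

lemma K_density_nnreal (k : Fin n) (o : Fin n → X × A × ℝ) :
    S.Kk k o = S.nu.withDensity fun u => ((Real.toNNReal (S.den k o u) : ℝ≥0) : ℝ≥0∞) :=
  S.Kk_apply k o

lemma integrable_K_iff (k : Fin n) (o : Fin n → X × A × ℝ) (h : X × A × ℝ → ℝ) :
    Integrable h (S.Kk k o) ↔ Integrable (fun u => S.den k o u * h u) S.nu := by
  rw [S.K_density_nnreal k o,
    integrable_withDensity_iff_integrable_smul (S.den_meas_slice k o).real_toNNReal]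
  constructor <;> intro hI <;> apply hI.congr <;>
    refine Filter.Eventually.of_forall fun u => ?_ <;>
    simp only [NNReal.smul_def, Real.coe_toNNReal _ (S.den_nonneg k o u), smul_eq_mul]

lemma K_integral_eq (k : Fin n) (o : Fin n → X × A × ℝ) (h : X × A × ℝ → ℝ)
    (hint : Integrable h (S.Kk k o)) :
    ∫ u, h u ∂(S.Kk k o)
      = ∫ x, S.xi x * ∫ a, S.pi k x o a
          * ∫ y, S.gam x a y * h (x, a, y) ∂S.lamY ∂S.lamA ∂S.lamX := by
  have hint1 : Integrable (fun u => S.den k o u * h u) S.nu := (S.integrable_K_iff k o h).1 hint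
  rw [S.K_density_nnreal k o,
    integral_withDensity_eq_integral_smul (S.den_meas_slice k o).real_toNNReal]
  have hsmul : (fun u => Real.toNNReal (S.den k o u) • h u)
      = fun u => S.den k o u * h u := by
    funext u
    rw [NNReal.smul_def, Real.coe_toNNReal _ (S.den_nonneg k o u), smul_eq_mul]
  rw [hsmul]
  have hnu : S.nu = S.lamX.prod (S.lamA.prod S.lamY) := rfl
  rw [hnu] at hint1 ⊢
  rw [MeasureTheory.integral_prod _ hint1]
  apply integral_congr_ae
  filter_upwards [hint1.prod_right_ae] with x hx
  rw [MeasureTheory.integral_prod _ hx]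
  have hptwise : ∀ a y, S.den k o (x, a, y) * h (x, a, y)
      = S.xi x * (S.pi k x o a * (S.gam x a y * h (x, a, y))) := by
    intro a y
    simp only [den]
    ring
  calc ∫ a, ∫ y, S.den k o (x, a, y) * h (x, a, y) ∂S.lamY ∂S.lamA
      = ∫ a, S.xi x * (S.pi k x o a * ∫ y, S.gam x a y * h (x, a, y) ∂S.lamY) ∂S.lamA := by
        congr 1
        funext a
        simp only [hptwise]
        rw [integral_const_mul, integral_const_mul]
    _ = S.xi x * ∫ a, S.pi k x o a * ∫ y, S.gam x a y * h (x, a, y) ∂S.lamY ∂S.lamA := by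
        rw [integral_const_mul]

lemma K_lintegral_eq (k : Fin n) (o : Fin n → X × A × ℝ) (he : X × A × ℝ → ℝ≥0∞)
    (hhe : Measurable he) :
    ∫⁻ u, he u ∂(S.Kk k o)
      = ∫⁻ x, ENNReal.ofReal (S.xi x) * ∫⁻ a, ENNReal.ofReal (S.pi k x o a)
          * ∫⁻ y, ENNReal.ofReal (S.gam x a y) * he (x, a, y) ∂S.lamY ∂S.lamA ∂S.lamX := by
  rw [S.Kk_apply,
    lintegral_withDensity_eq_lintegral_mul _ (S.den_meas_slice k o).ennreal_ofReal hhe]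
  have hm : Measurable fun u => ENNReal.ofReal (S.den k o u) * he u :=
    (S.den_meas_slice k o).ennreal_ofReal.mul hhe
  have hnu : S.nu = S.lamX.prod (S.lamA.prod S.lamY) := rfl
  rw [hnu]
  simp only [Pi.mul_apply]
  rw [lintegral_prod _ hm.aemeasurable]
  apply lintegral_congr
  intro x
  have hm2 : Measurable fun v : A × ℝ =>
      ENNReal.ofReal (S.den k o (x, v)) * he (x, v) :=
    hm.comp' (@measurable_prodMk_left X (A × ℝ) _ _ x)
  rw [lintegral_prod _ hm2.aemeasurable]
  have hsplit : ∀ a y, ENNReal.ofReal (S.den k o (x, a, y)) * he (x, a, y)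
      = ENNReal.ofReal (S.xi x) * (ENNReal.ofReal (S.pi k x o a)
          * (ENNReal.ofReal (S.gam x a y) * he (x, a, y))) := by
    intro a y
    simp only [den]
    rw [ENNReal.ofReal_mul (S.hxi_nonneg x), ENNReal.ofReal_mul (S.hpi_pos k x o a).le,
      mul_assoc, mul_assoc]
  calc ∫⁻ a, ∫⁻ y, ENNReal.ofReal (S.den k o (x, a, y)) * he (x, a, y) ∂S.lamY ∂S.lamA
      = ∫⁻ a, ENNReal.ofReal (S.xi x) * (ENNReal.ofReal (S.pi k x o a)
          * ∫⁻ y, ENNReal.ofReal (S.gam x a y) * he (x, a, y) ∂S.lamY) ∂S.lamA := by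
        congr 1
        funext a
        simp only [hsplit]
        have hy : Measurable fun y => ENNReal.ofReal (S.gam x a y) * he (x, a, y) :=
          (S.gam_slice x a).ennreal_ofReal.mul
            (hhe.comp' ((@measurable_prodMk_left X (A × ℝ) _ _ x).comp'
              (@measurable_prodMk_left A ℝ _ _ a)))
        rw [lintegral_const_mul _ (hy.const_mul _), lintegral_const_mul _ hy]
    _ = ENNReal.ofReal (S.xi x) * ∫⁻ a, ENNReal.ofReal (S.pi k x o a)
          * ∫⁻ y, ENNReal.ofReal (S.gam x a y) * he (x, a, y) ∂S.lamY ∂S.lamA := by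
        have ha : Measurable fun a => ENNReal.ofReal (S.pi k x o a)
            * ∫⁻ y, ENNReal.ofReal (S.gam x a y) * he (x, a, y) ∂S.lamY := by
          apply Measurable.mul (S.pi_slice k x o).ennreal_ofReal
          have hu : Measurable fun p : A × ℝ =>
              ENNReal.ofReal (S.gam x p.1 p.2) * he (x, p.1, p.2) := by
            apply Measurable.mul
            · exact (S.hgam_meas.comp'
                ((measurable_const.prodMk measurable_fst).prodMk measurable_snd)).ennreal_ofReal
            · exact hhe.comp' (measurable_const.prodMk (measurable_fst.prodMk measurable_snd))
          exact hu.lintegral_prod_right'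
        rw [lintegral_const_mul _ ha]

end KernelInt


section RandomVars

/-- the context distribution -/
def XiM : Measure X := S.lamX.withDensity fun x => ENNReal.ofReal (S.xi x)

def fbar (x : X) : ℝ := ∫ a, S.g x a * S.mustar x a ∂S.lamA

def Dfun (i : Fin n) (o : Fin n → X × A × ℝ) : ℝ :=
  S.g (o i).1 (o i).2.1 * ((o i).2.2 - S.mustar (o i).1 (o i).2.1) / S.pi i (o i).1 o (o i).2.1

def ffun (i : Fin n) (o : Fin n → X × A × ℝ) : ℝ := S.fbar (o i).1

def hSfun (i : Fin n) (o : Fin n → X × A × ℝ) : ℝ :=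
  (S.g (o i).1 (o i).2.1) ^ 2 * S.sig2 (o i).1 (o i).2.1 / (S.pi i (o i).1 o (o i).2.1) ^ 2

def ipw (i : Fin n) (o : Fin n → X × A × ℝ) : ℝ :=
  S.g (o i).1 (o i).2.1 * (o i).2.2 / S.pi i (o i).1 o (o i).2.1

def gmu (i : Fin n) (o : Fin n → X × A × ℝ) : ℝ :=
  S.g (o i).1 (o i).2.1 * S.mustar (o i).1 (o i).2.1 / S.pi i (o i).1 o (o i).2.1

lemma mustar_meas : Measurable fun p : X × A => S.mustar p.1 p.2 := by
  have h : (fun p : X × A => S.mustar p.1 p.2)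
      = fun p => ∫ y, y * S.gam p.1 p.2 y ∂S.lamY := funext fun p => S.hmu p.1 p.2
  rw [h]
  exact ((measurable_snd.mul S.hgam_meas).stronglyMeasurable.integral_prod_right').measurable

lemma sig2_meas : Measurable fun p : X × A => S.sig2 p.1 p.2 := by
  have h : (fun p : X × A => S.sig2 p.1 p.2)
      = fun p => ∫ y, (y - S.mustar p.1 p.2) ^ 2 * S.gam p.1 p.2 y ∂S.lamY :=
    funext fun p => S.hsig2 p.1 p.2
  rw [h]
  exact ((((measurable_snd.sub (S.mustar_meas.comp' measurable_fst)).pow_const 2).mul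
    S.hgam_meas).stronglyMeasurable.integral_prod_right').measurable

lemma fbar_meas : Measurable S.fbar :=
  ((S.hg_meas.mul S.mustar_meas).stronglyMeasurable.integral_prod_right').measurable

lemma gobs_meas (i : Fin n) : Measurable fun o : Fin n → X × A × ℝ => S.g (o i).1 (o i).2.1 :=
  S.hg_meas.comp' ((measurable_pi_apply i).fst.prodMk (measurable_pi_apply i).snd.fst)

lemma pio_meas (i : Fin n) :
    Measurable fun o : Fin n → X × A × ℝ => S.pi i (o i).1 o (o i).2.1 :=
  (S.hpi_meas i).comp' ((measurable_pi_apply i).fst.prodMk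
    (measurable_id.prodMk (measurable_pi_apply i).snd.fst))

lemma muobs_meas (i : Fin n) :
    Measurable fun o : Fin n → X × A × ℝ => S.mustar (o i).1 (o i).2.1 :=
  S.mustar_meas.comp' ((measurable_pi_apply i).fst.prodMk (measurable_pi_apply i).snd.fst)

lemma Dfun_meas (i : Fin n) : Measurable (S.Dfun i) :=
  ((S.gobs_meas i).mul ((measurable_pi_apply i).snd.snd.sub (S.muobs_meas i))).div
    (S.pio_meas i)

lemma ffun_meas (i : Fin n) : Measurable (S.ffun i) :=
  S.fbar_meas.comp' (measurable_pi_apply i).fst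

lemma hSfun_meas (i : Fin n) : Measurable (S.hSfun i) :=
  (((S.gobs_meas i).pow_const 2).mul
    (S.sig2_meas.comp' ((measurable_pi_apply i).fst.prodMk (measurable_pi_apply i).snd.fst))).div
    ((S.pio_meas i).pow_const 2)

lemma ipw_meas (i : Fin n) : Measurable (S.ipw i) :=
  ((S.gobs_meas i).mul (measurable_pi_apply i).snd.snd).div (S.pio_meas i)

lemma gmu_meas (i : Fin n) : Measurable (S.gmu i) :=
  ((S.gobs_meas i).mul (S.muobs_meas i)).div (S.pio_meas i)

lemma pi_upd (i : Fin n) (x : X) (o : Fin n → X × A × ℝ) (u : X × A × ℝ) (a : A) :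
    S.pi i x (Function.update o i u) a = S.pi i x o a :=
  S.hpi_hist i x _ _ a fun j hj => Function.update_of_ne (fun h => by rw [h] at hj; omega) _ _

lemma Dfun_upd (i : Fin n) (o : Fin n → X × A × ℝ) (u : X × A × ℝ) :
    S.Dfun i (Function.update o i u)
      = S.g u.1 u.2.1 * (u.2.2 - S.mustar u.1 u.2.1) / S.pi i u.1 o u.2.1 := by
  unfold Dfun
  rw [Function.update_self, S.pi_upd]

lemma ffun_upd (i : Fin n) (o : Fin n → X × A × ℝ) (u : X × A × ℝ) :
    S.ffun i (Function.update o i u) = S.fbar u.1 := by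
  unfold ffun
  rw [Function.update_self]

lemma hSfun_upd (i : Fin n) (o : Fin n → X × A × ℝ) (u : X × A × ℝ) :
    S.hSfun i (Function.update o i u)
      = (S.g u.1 u.2.1) ^ 2 * S.sig2 u.1 u.2.1 / (S.pi i u.1 o u.2.1) ^ 2 := by
  unfold hSfun
  rw [Function.update_self, S.pi_upd]

lemma ipw_upd (i : Fin n) (o : Fin n → X × A × ℝ) (u : X × A × ℝ) :
    S.ipw i (Function.update o i u) = S.g u.1 u.2.1 * u.2.2 / S.pi i u.1 o u.2.1 := by
  unfold ipw
  rw [Function.update_self, S.pi_upd]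

lemma gmu_upd (i : Fin n) (o : Fin n → X × A × ℝ) (u : X × A × ℝ) :
    S.gmu i (Function.update o i u)
      = S.g u.1 u.2.1 * S.mustar u.1 u.2.1 / S.pi i u.1 o u.2.1 := by
  unfold gmu
  rw [Function.update_self, S.pi_upd]

lemma Dfun_dep (i : Fin n) {o o' : Fin n → X × A × ℝ}
    (h : ∀ j : Fin n, (j : ℕ) ≤ (i : ℕ) → o j = o' j) : S.Dfun i o = S.Dfun i o' := by
  unfold Dfun
  rw [h i le_rfl, S.hpi_hist i _ o o' _ fun j hj => h j hj.le]

lemma ffun_dep (i : Fin n) {o o' : Fin n → X × A × ℝ}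
    (h : ∀ j : Fin n, (j : ℕ) ≤ (i : ℕ) → o j = o' j) : S.ffun i o = S.ffun i o' := by
  unfold ffun
  rw [h i le_rfl]

lemma hSfun_dep (i : Fin n) {o o' : Fin n → X × A × ℝ}
    (h : ∀ j : Fin n, (j : ℕ) ≤ (i : ℕ) → o j = o' j) : S.hSfun i o = S.hSfun i o' := by
  unfold hSfun
  rw [h i le_rfl, S.hpi_hist i _ o o' _ fun j hj => h j hj.le]

end RandomVars

section KernelZero

/-- mean-zero property of the outcome residual -/
lemma gamY_zero (x : X) (a : A) :
    ∫ y, S.gam x a y * (y - S.mustar x a) ∂S.lamY = 0 := by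
  have hsplit : (fun y => S.gam x a y * (y - S.mustar x a))
      = fun y => y * S.gam x a y - S.mustar x a * S.gam x a y := by
    funext y
    ring
  by_cases hI : Integrable (fun y => y * S.gam x a y) S.lamY
  · rw [hsplit, integral_sub hI ((S.gam_int x a).const_mul _), integral_const_mul,
      S.hgam_norm x a, ← S.hmu x a, mul_one, sub_self]
  · have h2 : ¬ Integrable (fun y => S.gam x a y * (y - S.mustar x a)) S.lamY := by
      intro hcon
      apply hI
      have : (fun y => y * S.gam x a y)
          = fun y => S.gam x a y * (y - S.mustar x a) + S.mustar x a * S.gam x a y := by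
        funext y
        ring
      rw [this]
      exact hcon.add ((S.gam_int x a).const_mul _)
    rw [integral_undef h2]

lemma gamY_sig2 (x : X) (a : A) :
    ∫ y, S.gam x a y * (y - S.mustar x a) ^ 2 ∂S.lamY = S.sig2 x a := by
  rw [S.hsig2 x a]
  congr 1
  funext y
  ring

/-- any "residual-type" integrand has zero kernel mean -/
lemma K_emean_zero (k : Fin n) (o : Fin n → X × A × ℝ) (ψ : X → A → ℝ) :
    ∫ u, ψ u.1 u.2.1 * (u.2.2 - S.mustar u.1 u.2.1) ∂(S.Kk k o) = 0 := by
  by_cases hint : Integrable (fun u => ψ u.1 u.2.1 * (u.2.2 - S.mustar u.1 u.2.1)) (S.Kk k o)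
  · rw [S.K_integral_eq k o _ hint]
    have hinner : ∀ x a, ∫ y, S.gam x a y * (ψ x a * (y - S.mustar x a)) ∂S.lamY = 0 := by
      intro x a
      have : (fun y => S.gam x a y * (ψ x a * (y - S.mustar x a)))
          = fun y => ψ x a * (S.gam x a y * (y - S.mustar x a)) := by
        funext y
        ring
      rw [this, integral_const_mul, S.gamY_zero x a, mul_zero]
    simp only [hinner, mul_zero, integral_zero]
  · exact integral_undef hint

lemma pigam_int (k : Fin n) (x : X) (o : Fin n → X × A × ℝ) :
    Integrable (fun v : A × ℝ => S.pi k x o v.1 * S.gam x v.1 v.2)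
      (S.lamA.prod S.lamY) := by
  have hm : AEStronglyMeasurable (fun v : A × ℝ => S.pi k x o v.1 * S.gam x v.1 v.2)
      (S.lamA.prod S.lamY) := by
    apply Measurable.aestronglyMeasurable
    exact ((S.pi_slice k x o).comp' measurable_fst).mul
      (S.hgam_meas.comp' ((measurable_const.prodMk measurable_fst).prodMk measurable_snd))
  rw [integrable_prod_iff hm]
  constructor
  · refine Filter.Eventually.of_forall fun a => ?_
    have hi : Integrable (fun y => S.pi k x o a * S.gam x a y) S.lamY :=
      (S.gam_int x a).const_mul _
    exact hi
  · have : (fun a => ∫ y, ‖S.pi k x o a * S.gam x a y‖ ∂S.lamY)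
        = fun a => S.pi k x o a := by
      funext a
      have : ∀ y, ‖S.pi k x o a * S.gam x a y‖ = S.pi k x o a * S.gam x a y := by
        intro y
        rw [Real.norm_eq_abs, abs_of_nonneg (mul_nonneg (S.hpi_pos k x o a).le
          (S.hgam_nonneg x a y))]
      simp only [this]
      rw [integral_const_mul, S.hgam_norm, mul_one]
    rw [this]
    exact S.pi_int k x o

lemma pigam_integral (k : Fin n) (x : X) (o : Fin n → X × A × ℝ) :
    ∫ v : A × ℝ, S.pi k x o v.1 * S.gam x v.1 v.2 ∂(S.lamA.prod S.lamY) = 1 := by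
  rw [MeasureTheory.integral_prod _ (S.pigam_int k x o)]
  have : ∀ a, ∫ y, S.pi k x o a * S.gam x a y ∂S.lamY = S.pi k x o a := by
    intro a
    rw [integral_const_mul, S.hgam_norm, mul_one]
  simp only [this]
  exact S.hpi_norm k x o

lemma Xi_prob : IsProbabilityMeasure S.XiM := by
  constructor
  rw [XiM, withDensity_apply _ MeasurableSet.univ, setLIntegral_univ, S.lint_xi]

lemma xiphi_integrable {φ : X → ℝ} (hφm : Measurable φ) (hφ : Integrable φ S.XiM) :
    Integrable (fun x => S.xi x * φ x) S.lamX := by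
  rw [XiM] at hφ
  have h1 := (integrable_withDensity_iff_integrable_smul S.hxi_meas.real_toNNReal).1
    (by exact hφ)
  apply h1.congr
  refine Filter.Eventually.of_forall fun x => ?_
  simp only [NNReal.smul_def, Real.coe_toNNReal _ (S.hxi_nonneg x), smul_eq_mul]

lemma xiphi_integral {φ : X → ℝ} (hφm : Measurable φ) :
    ∫ x, S.xi x * φ x ∂S.lamX = ∫ x, φ x ∂S.XiM := by
  rw [XiM]
  rw [show (fun x => ENNReal.ofReal (S.xi x))
    = fun x => ((Real.toNNReal (S.xi x) : ℝ≥0) : ℝ≥0∞) from rfl]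
  rw [integral_withDensity_eq_integral_smul S.hxi_meas.real_toNNReal]
  apply integral_congr_ae
  refine Filter.Eventually.of_forall fun x => ?_
  simp only [NNReal.smul_def, Real.coe_toNNReal _ (S.hxi_nonneg x), smul_eq_mul]

lemma K_fst_integrable (k : Fin n) (o : Fin n → X × A × ℝ) {φ : X → ℝ}
    (hφm : Measurable φ) (hφ : Integrable φ S.XiM) :
    Integrable (fun u : X × A × ℝ => φ u.1) (S.Kk k o) := by
  rw [S.integrable_K_iff]
  have hnu : S.nu = S.lamX.prod (S.lamA.prod S.lamY) := rfl
  rw [hnu]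
  have hm : AEStronglyMeasurable (fun u : X × A × ℝ => S.den k o u * φ u.1)
      (S.lamX.prod (S.lamA.prod S.lamY)) :=
    ((S.den_meas_slice k o).mul (hφm.comp' measurable_fst)).aestronglyMeasurable
  rw [integrable_prod_iff hm]
  constructor
  · refine Filter.Eventually.of_forall fun x => ?_
    have heq : (fun v : A × ℝ => S.den k o (x, v) * φ x)
        = fun v : A × ℝ => (S.xi x * φ x) * (S.pi k x o v.1 * S.gam x v.1 v.2) := by
      funext v
      simp only [den]
      ring
    rw [heq]
    exact (S.pigam_int k x o).const_mul _
  · have heq : (fun x => ∫ v : A × ℝ, ‖S.den k o (x, v) * φ x‖ ∂(S.lamA.prod S.lamY))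
        = fun x => |S.xi x * φ x| := by
      funext x
      have h1 : ∀ v : A × ℝ, ‖S.den k o (x, v) * φ x‖
          = |S.xi x * φ x| * (S.pi k x o v.1 * S.gam x v.1 v.2) := by
        intro v
        rw [Real.norm_eq_abs]
        have : S.den k o (x, v) * φ x
            = (S.xi x * φ x) * (S.pi k x o v.1 * S.gam x v.1 v.2) := by
          simp only [den]; ring
        rw [this, abs_mul, abs_of_nonneg (mul_nonneg (S.hpi_pos k x o v.1).le
          (S.hgam_nonneg x v.1 v.2))]
      simp only [h1]
      rw [integral_const_mul, S.pigam_integral, mul_one]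
    rw [heq]
    have habs : (fun x => |S.xi x * φ x|) = fun x => S.xi x * |φ x| := by
      funext x
      rw [abs_mul, abs_of_nonneg (S.hxi_nonneg x)]
    rw [habs]
    exact S.xiphi_integrable hφm.abs hφ.abs

lemma K_fst_integral (k : Fin n) (o : Fin n → X × A × ℝ) {φ : X → ℝ}
    (hφm : Measurable φ) (hφ : Integrable φ S.XiM) :
    ∫ u : X × A × ℝ, φ u.1 ∂(S.Kk k o) = ∫ x, φ x ∂S.XiM := by
  rw [S.K_integral_eq k o _ (S.K_fst_integrable k o hφm hφ)]
  have h1 : ∀ x a, ∫ y, S.gam x a y * φ x ∂S.lamY = φ x := by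
    intro x a
    have : (fun y => S.gam x a y * φ x) = fun y => φ x * S.gam x a y := by
      funext y; ring
    rw [this, integral_const_mul, S.hgam_norm, mul_one]
  simp only [h1]
  have h2 : ∀ x, ∫ a, S.pi k x o a * φ x ∂S.lamA = φ x := by
    intro x
    have : (fun a => S.pi k x o a * φ x) = fun a => φ x * S.pi k x o a := by
      funext a; ring
    rw [this, integral_const_mul, S.hpi_norm, mul_one]
  simp only [h2]
  exact S.xiphi_integral hφm

/-- second-moment identification with the conditional variance -/
lemma K_Dsq_eq (k : Fin n) (o : Fin n → X × A × ℝ)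
    (h1 : Integrable (fun u : X × A × ℝ =>
      (S.g u.1 u.2.1 * (u.2.2 - S.mustar u.1 u.2.1) / S.pi k u.1 o u.2.1) ^ 2) (S.Kk k o))
    (h2 : Integrable (fun u : X × A × ℝ =>
      (S.g u.1 u.2.1) ^ 2 * S.sig2 u.1 u.2.1 / (S.pi k u.1 o u.2.1) ^ 2) (S.Kk k o)) :
    ∫ u, (S.g u.1 u.2.1 * (u.2.2 - S.mustar u.1 u.2.1) / S.pi k u.1 o u.2.1) ^ 2 ∂(S.Kk k o)
      = ∫ u, (S.g u.1 u.2.1) ^ 2 * S.sig2 u.1 u.2.1 / (S.pi k u.1 o u.2.1) ^ 2 ∂(S.Kk k o) := by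
  rw [S.K_integral_eq k o _ h1, S.K_integral_eq k o _ h2]
  congr 1
  funext x
  congr 1
  congr 1
  funext a
  congr 1
  have hL : (fun y => S.gam x a y * (S.g x a * (y - S.mustar x a) / S.pi k x o a) ^ 2)
      = fun y => (S.g x a / S.pi k x o a) ^ 2 * (S.gam x a y * (y - S.mustar x a) ^ 2) := by
    funext y
    field_simp
  have hR : (fun y => S.gam x a y * ((S.g x a) ^ 2 * S.sig2 x a / (S.pi k x o a) ^ 2))
      = fun y => ((S.g x a / S.pi k x o a) ^ 2 * S.sig2 x a) * S.gam x a y := by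
    funext y
    field_simp
  rw [hL, hR, integral_const_mul, integral_const_mul, S.gamY_sig2, S.hgam_norm, mul_one]

end KernelZero


section Identities

variable [Nonempty X] [Nonempty A]

lemma exPt : Nonempty (Fin n → X × A × ℝ) :=
  ⟨fun _ => (Classical.arbitrary X, Classical.arbitrary A, 0)⟩

/-- expectations of residual-type functionals vanish -/
lemma integral_emean_zero (i : Fin n) (G : (Fin n → X × A × ℝ) → ℝ) (hG : Measurable G)
    (hdep : ∀ o o', (∀ j : Fin n, (j : ℕ) < (i : ℕ) + 1 → o j = o' j) → G o = G o')
    (ψ : (Fin n → X × A × ℝ) → X → A → ℝ)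
    (hform : ∀ o u, G (Function.update o i u)
      = ψ o u.1 u.2.1 * (u.2.2 - S.mustar u.1 u.2.1))
    (hint : Integrable G S.P) :
    ∫ o, G o ∂S.P = 0 := by
  haveI := exPt (X := X) (A := A) (n := n)
  set ω₀ : Fin n → X × A × ℝ := Classical.arbitrary _
  rw [S.integral_eval ω₀ i G hG hdep hint]
  have h0 : ∀ o, ∫ u, G (Function.update o i u) ∂(S.Kk i o) = 0 := by
    intro o
    have he : (fun u => G (Function.update o i u))
        = fun u => ψ o u.1 u.2.1 * (u.2.2 - S.mustar u.1 u.2.1) := funext (hform o)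
    rw [he]
    exact S.K_emean_zero i o (ψ o)
  simp only [h0, integral_zero]

/-- expectation of a function of the `j`-th context -/
lemma integral_fst_eval (j : Fin n) (φ : X → ℝ) (hφm : Measurable φ)
    (hφ : Integrable φ S.XiM)
    (hint : Integrable (fun o => φ (o j).1) S.P) :
    ∫ o, φ (o j).1 ∂S.P = ∫ x, φ x ∂S.XiM := by
  haveI := exPt (X := X) (A := A) (n := n)
  haveI := S.P_prob
  set ω₀ : Fin n → X × A × ℝ := Classical.arbitrary _
  rw [S.integral_eval ω₀ j (fun o => φ (o j).1)
    (hφm.comp' (measurable_pi_apply j).fst)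
    (fun o o' h => by rw [h j (by omega)]) hint]
  have h0 : ∀ o, ∫ u, φ ((Function.update o j u) j).1 ∂(S.Kk j o) = ∫ x, φ x ∂S.XiM := by
    intro o
    simp only [Function.update_self]
    exact S.K_fst_integral j o hφm hφ
  simp only [h0]
  haveI : IsProbabilityMeasure (S.Q ω₀ (j : ℕ)) := inferInstance
  simp [integral_const]

/-- factorization for products with a function of a later context -/
lemma integral_mul_fst (j : Fin n) (F : (Fin n → X × A × ℝ) → ℝ) (hF : Measurable F)
    (hdepF : ∀ o o', (∀ m : Fin n, (m : ℕ) < (j : ℕ) → o m = o' m) → F o = F o')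
    (φ : X → ℝ) (hφm : Measurable φ) (hφ : Integrable φ S.XiM)
    (hint : Integrable (fun o => F o * φ (o j).1) S.P) :
    ∫ o, F o * φ (o j).1 ∂S.P = (∫ o, F o ∂S.P) * ∫ x, φ x ∂S.XiM := by
  haveI := exPt (X := X) (A := A) (n := n)
  haveI := S.P_prob
  set ω₀ : Fin n → X × A × ℝ := Classical.arbitrary _
  have hdep' : ∀ o o', (∀ m : Fin n, (m : ℕ) < (j : ℕ) + 1 → o m = o' m) →
      F o * φ (o j).1 = F o' * φ (o' j).1 := by
    intro o o' h
    rw [hdepF o o' fun m hm => h m (by omega), h j (by omega)]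
  rw [S.integral_eval ω₀ j (fun o => F o * φ (o j).1)
    (hF.mul (hφm.comp' (measurable_pi_apply j).fst)) hdep' hint]
  have h0 : ∀ o, ∫ u, F (Function.update o j u) * φ ((Function.update o j u) j).1
      ∂(S.Kk j o) = F o * ∫ x, φ x ∂S.XiM := by
    intro o
    have hFu : ∀ u : X × A × ℝ, F (Function.update o j u) = F o := fun u =>
      hdepF _ _ fun m hm => Function.update_of_ne (fun h => by rw [h] at hm; omega) _ _
    have he : (fun u : X × A × ℝ => F (Function.update o j u)
        * φ ((Function.update o j u) j).1) = fun u => F o * φ u.1 := by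
      funext u
      rw [hFu, Function.update_self]
    rw [he, integral_const_mul, S.K_fst_integral j o hφm hφ]
  simp only [h0]
  rw [integral_mul_const, S.integral_Q ω₀ (j : ℕ) F hF hdepF]

/-- the conditional second-moment identity -/
lemma integral_Dsq (i : Fin n)
    (h1 : Integrable (fun o => (S.Dfun i o) ^ 2) S.P)
    (h2 : Integrable (S.hSfun i) S.P) :
    ∫ o, (S.Dfun i o) ^ 2 ∂S.P = ∫ o, S.hSfun i o ∂S.P := by
  haveI := exPt (X := X) (A := A) (n := n)
  set ω₀ : Fin n → X × A × ℝ := Classical.arbitrary _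
  have hDmeas : Measurable fun o => (S.Dfun i o) ^ 2 := (S.Dfun_meas i).pow_const 2
  have hDdep : ∀ o o', (∀ j : Fin n, (j : ℕ) < (i : ℕ) + 1 → o j = o' j) →
      (S.Dfun i o) ^ 2 = (S.Dfun i o') ^ 2 := fun o o' h => by
    rw [S.Dfun_dep i fun j hj => h j (by omega)]
  have hSdep : ∀ o o', (∀ j : Fin n, (j : ℕ) < (i : ℕ) + 1 → o j = o' j) →
      S.hSfun i o = S.hSfun i o' := fun o o' h =>
    S.hSfun_dep i fun j hj => h j (by omega)
  rw [S.integral_eval ω₀ i _ hDmeas hDdep h1,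
    S.integral_eval ω₀ i _ (S.hSfun_meas i) hSdep h2]
  apply integral_congr_ae
  filter_upwards [S.ae_integrable_eval ω₀ i _ hDmeas hDdep h1,
    S.ae_integrable_eval ω₀ i _ (S.hSfun_meas i) hSdep h2] with o ho1 ho2
  have e1 : (fun u : X × A × ℝ => (S.Dfun i (Function.update o i u)) ^ 2)
      = fun u => (S.g u.1 u.2.1 * (u.2.2 - S.mustar u.1 u.2.1) / S.pi i u.1 o u.2.1) ^ 2 := by
    funext u
    rw [S.Dfun_upd]
  have e2 : (fun u : X × A × ℝ => S.hSfun i (Function.update o i u))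
      = fun u => (S.g u.1 u.2.1) ^ 2 * S.sig2 u.1 u.2.1 / (S.pi i u.1 o u.2.1) ^ 2 := by
    funext u
    rw [S.hSfun_upd]
  rw [e1] at ho1 ⊢
  rw [e2] at ho2 ⊢
  exact S.K_Dsq_eq i o ho1 ho2

end Identities


section Finiteness

lemma gmu_dep (i : Fin n) {o o' : Fin n → X × A × ℝ}
    (h : ∀ j : Fin n, (j : ℕ) ≤ (i : ℕ) → o j = o' j) : S.gmu i o = S.gmu i o' := by
  unfold gmu
  rw [h i le_rfl, S.hpi_hist i _ o o' _ fun j hj => h j hj.le]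

lemma ipw_dep (i : Fin n) {o o' : Fin n → X × A × ℝ}
    (h : ∀ j : Fin n, (j : ℕ) ≤ (i : ℕ) → o j = o' j) : S.ipw i o = S.ipw i o' := by
  unfold ipw
  rw [h i le_rfl, S.hpi_hist i _ o o' _ fun j hj => h j hj.le]

lemma mu_sq_le (x : X) (a : A) :
    ENNReal.ofReal ((S.mustar x a) ^ 2)
      ≤ ∫⁻ y, ENNReal.ofReal (S.gam x a y) * ENNReal.ofReal (y ^ 2) ∂S.lamY := by
  have hmeq : ∀ y : ℝ, ENNReal.ofReal (S.gam x a y) * ENNReal.ofReal (y ^ 2)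
      = ENNReal.ofReal (y ^ 2 * S.gam x a y) := by
    intro y
    rw [mul_comm, ← ENNReal.ofReal_mul (sq_nonneg y)]
  by_cases h2 : Integrable (fun y => y ^ 2 * S.gam x a y) S.lamY
  · have h1 : Integrable (fun y => y * S.gam x a y) S.lamY := by
      have hb : Integrable (fun y => (S.gam x a y + y ^ 2 * S.gam x a y) / 2) S.lamY :=
        ((S.gam_int x a).add h2).div_const 2
      refine hb.mono' (measurable_id.mul (S.gam_slice x a)).aestronglyMeasurable
        (Filter.Eventually.of_forall fun y => ?_)
      rw [Real.norm_eq_abs, abs_mul, abs_of_nonneg (S.hgam_nonneg x a y)]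
      nlinarith [sq_nonneg (|y| - 1), sq_abs y, abs_nonneg y, S.hgam_nonneg x a y]
    have hvar : (0 : ℝ) ≤ ∫ y, (y - S.mustar x a) ^ 2 * S.gam x a y ∂S.lamY :=
      integral_nonneg fun y => mul_nonneg (sq_nonneg _) (S.hgam_nonneg _ _ _)
    have hexp : ∫ y, (y - S.mustar x a) ^ 2 * S.gam x a y ∂S.lamY
        = ∫ y, y ^ 2 * S.gam x a y ∂S.lamY - (S.mustar x a) ^ 2 := by
      have e : (fun y => (y - S.mustar x a) ^ 2 * S.gam x a y)
          = fun y => (y ^ 2 * S.gam x a y - (2 * S.mustar x a) * (y * S.gam x a y))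
            + (S.mustar x a) ^ 2 * S.gam x a y := by
        funext y
        ring
      have hint1 : Integrable (fun y => y ^ 2 * S.gam x a y
          - 2 * S.mustar x a * (y * S.gam x a y)) S.lamY := h2.sub (h1.const_mul _)
      have hint2 : Integrable (fun y => (S.mustar x a) ^ 2 * S.gam x a y) S.lamY :=
        (S.gam_int x a).const_mul _
      rw [e, integral_add hint1 hint2,
        integral_sub h2 (h1.const_mul _), integral_const_mul, integral_const_mul,
        S.hgam_norm, ← S.hmu x a]
      ring
    have hineq : (S.mustar x a) ^ 2 ≤ ∫ y, y ^ 2 * S.gam x a y ∂S.lamY := by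
      rw [hexp] at hvar
      linarith
    calc ENNReal.ofReal ((S.mustar x a) ^ 2)
        ≤ ENNReal.ofReal (∫ y, y ^ 2 * S.gam x a y ∂S.lamY) := ENNReal.ofReal_le_ofReal hineq
      _ = ∫⁻ y, ENNReal.ofReal (y ^ 2 * S.gam x a y) ∂S.lamY :=
          ofReal_integral_eq_lintegral_ofReal h2 (Filter.Eventually.of_forall fun y =>
            mul_nonneg (sq_nonneg y) (S.hgam_nonneg x a y))
      _ = ∫⁻ y, ENNReal.ofReal (S.gam x a y) * ENNReal.ofReal (y ^ 2) ∂S.lamY :=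
          lintegral_congr fun y => (hmeq y).symm
  · have hinf : ∫⁻ y, ENNReal.ofReal (S.gam x a y) * ENNReal.ofReal (y ^ 2) ∂S.lamY = ∞ := by
      by_contra hfin
      apply h2
      refine ⟨((measurable_id.pow_const 2).mul (S.gam_slice x a)).aestronglyMeasurable, ?_⟩
      show (∫⁻ y, ‖y ^ 2 * S.gam x a y‖ₑ ∂S.lamY) < ∞
      have he : ∫⁻ y, ‖y ^ 2 * S.gam x a y‖ₑ ∂S.lamY
          = ∫⁻ y, ENNReal.ofReal (S.gam x a y) * ENNReal.ofReal (y ^ 2) ∂S.lamY := by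
        apply lintegral_congr
        intro y
        rw [Real.enorm_eq_ofReal (mul_nonneg (sq_nonneg y) (S.hgam_nonneg x a y)), hmeq y]
      rw [he]
      exact lt_top_iff_ne_top.2 hfin
    rw [hinf]
    exact le_top

variable [Nonempty X] [Nonempty A]

lemma lint_fst (j : Fin n) (φ : X → ℝ≥0∞) (hφ : Measurable φ) :
    ∫⁻ o, φ (o j).1 ∂S.P = ∫⁻ x, φ x ∂S.XiM := by
  haveI := exPt (X := X) (A := A) (n := n)
  haveI := S.P_prob
  set ω₀ : Fin n → X × A × ℝ := Classical.arbitrary _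
  rw [S.lintegral_eval ω₀ j (fun o => φ (o j).1) (hφ.comp' (measurable_pi_apply j).fst)
    (fun o o' h => by rw [h j (by omega)])]
  have h0 : ∀ o, ∫⁻ u, φ ((Function.update o j u) j).1 ∂(S.Kk j o)
      = ∫⁻ x, φ x ∂S.XiM := by
    intro o
    simp only [Function.update_self]
    rw [S.K_lintegral_eq j o (fun u => φ u.1) (hφ.comp' measurable_fst)]
    have hy : ∀ x a, ∫⁻ y, ENNReal.ofReal (S.gam x a y) * φ x ∂S.lamY = φ x := by
      intro x a
      rw [lintegral_mul_const _ (S.gam_slice x a).ennreal_ofReal, S.lint_gam, one_mul]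
    simp only [hy]
    have ha : ∀ x, ∫⁻ a, ENNReal.ofReal (S.pi j x o a) * φ x ∂S.lamA = φ x := by
      intro x
      rw [lintegral_mul_const _ (S.pi_slice j x o).ennreal_ofReal, S.lint_pi, one_mul]
    simp only [ha]
    rw [XiM, lintegral_withDensity_eq_lintegral_mul _ S.hxi_meas.ennreal_ofReal hφ]
    simp only [Pi.mul_apply]
  simp only [h0]
  haveI : IsProbabilityMeasure (S.Q ω₀ (j : ℕ)) := inferInstance
  rw [lintegral_const, measure_univ, mul_one]

lemma ffun_memL2 (i : Fin n) (hfb2 : Integrable (fun x => S.fbar x ^ 2) S.XiM) :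
    MemLp (S.ffun i) 2 S.P := by
  rw [memLp_two_iff_integrable_sq (S.ffun_meas i).aestronglyMeasurable]
  refine ⟨((S.ffun_meas i).pow_const 2).aestronglyMeasurable, ?_⟩
  show (∫⁻ o, ‖(S.ffun i o) ^ 2‖ₑ ∂S.P) < ∞
  have he : ∫⁻ o, ‖(S.ffun i o) ^ 2‖ₑ ∂S.P
      = ∫⁻ o, ENNReal.ofReal ((S.fbar (o i).1) ^ 2) ∂S.P := by
    apply lintegral_congr
    intro o
    rw [Real.enorm_eq_ofReal (sq_nonneg _)]
    rfl
  rw [he, S.lint_fst i (fun x => ENNReal.ofReal ((S.fbar x) ^ 2))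
    (S.fbar_meas.pow_const 2).ennreal_ofReal]
  have he2 : ∫⁻ x, ENNReal.ofReal ((S.fbar x) ^ 2) ∂S.XiM
      = ∫⁻ x, ‖(S.fbar x) ^ 2‖ₑ ∂S.XiM := by
    apply lintegral_congr
    intro x
    rw [Real.enorm_eq_ofReal (sq_nonneg _)]
  rw [he2]
  exact hfb2.2

lemma gmu_lint_le (i : Fin n) :
    ∫⁻ o, ENNReal.ofReal ((S.gmu i o) ^ 2) ∂S.P
      ≤ ∫⁻ o, ENNReal.ofReal ((S.ipw i o) ^ 2) ∂S.P := by
  haveI := exPt (X := X) (A := A) (n := n)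
  set ω₀ : Fin n → X × A × ℝ := Classical.arbitrary _
  rw [S.lintegral_eval ω₀ i (fun o => ENNReal.ofReal ((S.gmu i o) ^ 2))
    (((S.gmu_meas i).pow_const 2).ennreal_ofReal)
    (fun o o' h => by rw [S.gmu_dep i fun j hj => h j (by omega)]),
    S.lintegral_eval ω₀ i (fun o => ENNReal.ofReal ((S.ipw i o) ^ 2))
    (((S.ipw_meas i).pow_const 2).ennreal_ofReal)
    (fun o o' h => by rw [S.ipw_dep i fun j hj => h j (by omega)])]
  apply lintegral_mono
  intro o
  simp only [S.gmu_upd, S.ipw_upd]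
  rw [S.K_lintegral_eq i o
    (fun u => ENNReal.ofReal ((S.g u.1 u.2.1 * S.mustar u.1 u.2.1 / S.pi i u.1 o u.2.1) ^ 2))
    (by
      apply Measurable.ennreal_ofReal
      exact ((S.hg_meas.comp' (measurable_fst.prodMk measurable_snd.fst)).mul
        (S.mustar_meas.comp' (measurable_fst.prodMk measurable_snd.fst))).div
        ((S.hpi_meas i).comp' (measurable_fst.prodMk
          (measurable_const.prodMk measurable_snd.fst))) |>.pow_const 2),
    S.K_lintegral_eq i o
    (fun u => ENNReal.ofReal ((S.g u.1 u.2.1 * u.2.2 / S.pi i u.1 o u.2.1) ^ 2))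
    (by
      apply Measurable.ennreal_ofReal
      exact ((S.hg_meas.comp' (measurable_fst.prodMk measurable_snd.fst)).mul
        measurable_snd.snd).div
        ((S.hpi_meas i).comp' (measurable_fst.prodMk
          (measurable_const.prodMk measurable_snd.fst))) |>.pow_const 2)]
  apply lintegral_mono
  intro x
  apply mul_le_mul_right
  apply lintegral_mono
  intro a
  apply mul_le_mul_right
  have hL : ∫⁻ y, ENNReal.ofReal (S.gam x a y)
      * ENNReal.ofReal ((S.g x a * S.mustar x a / S.pi i x o a) ^ 2) ∂S.lamY
      = ENNReal.ofReal ((S.g x a / S.pi i x o a) ^ 2)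
        * ENNReal.ofReal ((S.mustar x a) ^ 2) := by
    rw [lintegral_mul_const _ (S.gam_slice x a).ennreal_ofReal, S.lint_gam, one_mul,
      ← ENNReal.ofReal_mul (sq_nonneg _)]
    congr 1
    ring
  have hR : ∫⁻ y, ENNReal.ofReal (S.gam x a y)
      * ENNReal.ofReal ((S.g x a * y / S.pi i x o a) ^ 2) ∂S.lamY
      = ENNReal.ofReal ((S.g x a / S.pi i x o a) ^ 2)
        * ∫⁻ y, ENNReal.ofReal (S.gam x a y) * ENNReal.ofReal (y ^ 2) ∂S.lamY := by
    have hpt : ∀ y : ℝ, ENNReal.ofReal (S.gam x a y)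
        * ENNReal.ofReal ((S.g x a * y / S.pi i x o a) ^ 2)
        = ENNReal.ofReal ((S.g x a / S.pi i x o a) ^ 2)
          * (ENNReal.ofReal (S.gam x a y) * ENNReal.ofReal (y ^ 2)) := by
      intro y
      rw [show (S.g x a * y / S.pi i x o a) ^ 2
        = (S.g x a / S.pi i x o a) ^ 2 * y ^ 2 from by ring,
        ENNReal.ofReal_mul (sq_nonneg _)]
      ring
    simp only [hpt]
    have hgy : Measurable fun y : ℝ => ENNReal.ofReal (S.gam x a y) * ENNReal.ofReal (y ^ 2) :=
      (S.gam_slice x a).ennreal_ofReal.mul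
        (by exact (measurable_id.pow_const 2).ennreal_ofReal)
    rw [lintegral_const_mul _ hgy]
  rw [hL, hR]
  exact mul_le_mul_right (S.mu_sq_le x a) _

lemma ipw_memL2 (i : Fin n) (h : Integrable (fun o => (S.ipw i o) ^ 2) S.P) :
    MemLp (S.ipw i) 2 S.P :=
  (memLp_two_iff_integrable_sq (S.ipw_meas i).aestronglyMeasurable).2 h

lemma gmu_memL2 (i : Fin n) (h : Integrable (fun o => (S.ipw i o) ^ 2) S.P) :
    MemLp (S.gmu i) 2 S.P := by
  rw [memLp_two_iff_integrable_sq (S.gmu_meas i).aestronglyMeasurable]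
  refine ⟨((S.gmu_meas i).pow_const 2).aestronglyMeasurable, ?_⟩
  show (∫⁻ o, ‖(S.gmu i o) ^ 2‖ₑ ∂S.P) < ∞
  have he : ∫⁻ o, ‖(S.gmu i o) ^ 2‖ₑ ∂S.P = ∫⁻ o, ENNReal.ofReal ((S.gmu i o) ^ 2) ∂S.P :=
    lintegral_congr fun o => Real.enorm_eq_ofReal (sq_nonneg _)
  have he2 : ∫⁻ o, ENNReal.ofReal ((S.ipw i o) ^ 2) ∂S.P
      = ∫⁻ o, ‖(S.ipw i o) ^ 2‖ₑ ∂S.P :=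
    lintegral_congr fun o => (Real.enorm_eq_ofReal (sq_nonneg _)).symm
  rw [he]
  refine lt_of_le_of_lt (S.gmu_lint_le i) ?_
  rw [he2]
  exact h.2

lemma Dfun_memL2 (i : Fin n) (h : Integrable (fun o => (S.ipw i o) ^ 2) S.P) :
    MemLp (S.Dfun i) 2 S.P := by
  have he : S.Dfun i = fun o => S.ipw i o - S.gmu i o := by
    funext o
    simp only [Dfun, ipw, gmu]
    ring
  rw [he]
  exact (S.ipw_memL2 i h).sub (S.gmu_memL2 i h)

end Finiteness


section Main

variable [Nonempty X] [Nonempty A]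

theorem variance_formula (hn : 0 < n)
    (hfb_L2 : MemLp S.fbar 2 S.XiM)
    (hipw : ∀ i : Fin n, Integrable (fun o => (S.ipw i o) ^ 2) S.P)
    (hS2i : ∀ i : Fin n, Integrable (S.hSfun i) S.P)
    (T : (Fin n → X × A × ℝ) → ℝ)
    (hT : T = fun o => (1 / (n : ℝ)) * ∑ i : Fin n, (S.Dfun i o + S.ffun i o))
    (hT_L2 : MemLp T 2 S.P) :
    (n : ℝ) * variance T S.P
      = variance S.fbar S.XiM + (1 / (n : ℝ)) * ∑ i : Fin n, ∫ o, S.hSfun i o ∂S.P := by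
  haveI := S.P_prob
  haveI := S.Xi_prob
  have hn' : (n : ℝ) ≠ 0 := Nat.cast_ne_zero.2 hn.ne'
  set τ : ℝ := ∫ x, S.fbar x ∂S.XiM with hτ
  set q : ℝ := ∫ x, S.fbar x ^ 2 ∂S.XiM with hq
  -- L² facts
  have mD : ∀ i : Fin n, MemLp (S.Dfun i) 2 S.P := fun i => S.Dfun_memL2 i (hipw i)
  have hfb2 : Integrable (fun x => S.fbar x ^ 2) S.XiM := hfb_L2.integrable_sq
  have hfb1 : Integrable S.fbar S.XiM := hfb_L2.integrable one_le_two
  have mf : ∀ i : Fin n, MemLp (S.ffun i) 2 S.P := fun i => S.ffun_memL2 i hfb2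
  have hprod : ∀ (u v : (Fin n → X × A × ℝ) → ℝ), MemLp u 2 S.P → MemLp v 2 S.P →
      Integrable (fun o => u o * v o) S.P := fun u v hu hv =>
    integrable_mul_of_sq hu.aestronglyMeasurable hv.aestronglyMeasurable
      hu.integrable_sq hv.integrable_sq
  -- first moments
  have ED : ∀ i : Fin n, ∫ o, S.Dfun i o ∂S.P = 0 := by
    intro i
    refine S.integral_emean_zero i (S.Dfun i) (S.Dfun_meas i)
      (fun o o' h => S.Dfun_dep i fun j hj => h j (by omega))
      (fun o x a => S.g x a / S.pi i x o a) (fun o u => ?_) ((mD i).integrable one_le_two)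
    rw [S.Dfun_upd]
    ring
  have Ef : ∀ i : Fin n, ∫ o, S.ffun i o ∂S.P = τ := by
    intro i
    have h := S.integral_fst_eval i S.fbar S.fbar_meas hfb1 ((mf i).integrable one_le_two)
    exact h
  have Ef2 : ∀ i : Fin n, ∫ o, S.ffun i o * S.ffun i o ∂S.P = q := by
    intro i
    have hint : Integrable (fun o => S.fbar (o i).1 ^ 2) S.P := (mf i).integrable_sq
    have h := S.integral_fst_eval i (fun x => S.fbar x ^ 2)
      (S.fbar_meas.pow_const 2) hfb2 hint
    have he : ∫ o, S.ffun i o * S.ffun i o ∂S.P = ∫ o, S.fbar (o i).1 ^ 2 ∂S.P := by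
      apply integral_congr_ae
      refine Filter.Eventually.of_forall fun o => ?_
      simp only [ffun]
      ring
    rw [he, h]
  have EDsq : ∀ i : Fin n, ∫ o, S.Dfun i o * S.Dfun i o ∂S.P = ∫ o, S.hSfun i o ∂S.P := by
    intro i
    have he : ∫ o, S.Dfun i o * S.Dfun i o ∂S.P = ∫ o, (S.Dfun i o) ^ 2 ∂S.P := by
      apply integral_congr_ae
      refine Filter.Eventually.of_forall fun o => ?_
      ring
    rw [he]
    exact S.integral_Dsq i ((mD i).integrable_sq) (hS2i i)
  have EDf_same : ∀ i : Fin n, ∫ o, S.Dfun i o * S.ffun i o ∂S.P = 0 := by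
    intro i
    refine S.integral_emean_zero i (fun o => S.Dfun i o * S.ffun i o)
      ((S.Dfun_meas i).mul (S.ffun_meas i))
      (fun o o' h => by
        rw [S.Dfun_dep i fun j hj => h j (by omega), S.ffun_dep i fun j hj => h j (by omega)])
      (fun o x a => S.g x a / S.pi i x o a * S.fbar x) (fun o u => ?_)
      (hprod _ _ (mD i) (mf i))
    rw [S.Dfun_upd, S.ffun_upd]
    ring
  have EfD_same : ∀ i : Fin n, ∫ o, S.ffun i o * S.Dfun i o ∂S.P = 0 := by
    intro i
    rw [show (fun o => S.ffun i o * S.Dfun i o) = fun o => S.Dfun i o * S.ffun i o from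
      funext fun o => mul_comm _ _]
    exact EDf_same i
  -- cross moments, i < j
  have EDD : ∀ i j : Fin n, (i : ℕ) < (j : ℕ) → ∫ o, S.Dfun i o * S.Dfun j o ∂S.P = 0 := by
    intro i j hij
    refine S.integral_emean_zero j (fun o => S.Dfun i o * S.Dfun j o)
      ((S.Dfun_meas i).mul (S.Dfun_meas j))
      (fun o o' h => by
        rw [S.Dfun_dep i fun m hm => h m (by omega), S.Dfun_dep j fun m hm => h m (by omega)])
      (fun o x a => S.Dfun i o * (S.g x a / S.pi j x o a)) (fun o u => ?_)
      (hprod _ _ (mD i) (mD j))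
    have hDi : S.Dfun i (Function.update o j u) = S.Dfun i o :=
      S.Dfun_dep i fun m hm =>
        Function.update_of_ne (fun h => by rw [h] at hm; omega) _ _
    rw [hDi, S.Dfun_upd]
    ring
  have EfD : ∀ i j : Fin n, (i : ℕ) < (j : ℕ) → ∫ o, S.ffun i o * S.Dfun j o ∂S.P = 0 := by
    intro i j hij
    refine S.integral_emean_zero j (fun o => S.ffun i o * S.Dfun j o)
      ((S.ffun_meas i).mul (S.Dfun_meas j))
      (fun o o' h => by
        rw [S.ffun_dep i fun m hm => h m (by omega), S.Dfun_dep j fun m hm => h m (by omega)])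
      (fun o x a => S.ffun i o * (S.g x a / S.pi j x o a)) (fun o u => ?_)
      (hprod _ _ (mf i) (mD j))
    have hfi : S.ffun i (Function.update o j u) = S.ffun i o :=
      S.ffun_dep i fun m hm =>
        Function.update_of_ne (fun h => by rw [h] at hm; omega) _ _
    rw [hfi, S.Dfun_upd]
    ring
  have EDf : ∀ i j : Fin n, (i : ℕ) < (j : ℕ) → ∫ o, S.Dfun i o * S.ffun j o ∂S.P = 0 := by
    intro i j hij
    have h := S.integral_mul_fst j (S.Dfun i) (S.Dfun_meas i)
      (fun o o' h => S.Dfun_dep i fun m hm => h m (by omega))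
      S.fbar S.fbar_meas hfb1 (hprod _ _ (mD i) (mf j))
    rw [show (fun o => S.Dfun i o * S.ffun j o) = fun o => S.Dfun i o * S.fbar (o j).1 from
      rfl]
    rw [h, ED i, zero_mul]
  have Eff : ∀ i j : Fin n, (i : ℕ) < (j : ℕ) →
      ∫ o, S.ffun i o * S.ffun j o ∂S.P = τ * τ := by
    intro i j hij
    have h := S.integral_mul_fst j (S.ffun i) (S.ffun_meas i)
      (fun o o' h => S.ffun_dep i fun m hm => h m (by omega))
      S.fbar S.fbar_meas hfb1 (hprod _ _ (mf i) (mf j))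
    rw [show (fun o => S.ffun i o * S.ffun j o) = fun o => S.ffun i o * S.fbar (o j).1 from
      rfl]
    rw [h, Ef i]
  -- pairwise moments of t i := D i + f i
  have E_t : ∀ i : Fin n, ∫ o, (S.Dfun i o + S.ffun i o) ∂S.P = τ := by
    intro i
    rw [integral_add ((mD i).integrable one_le_two) ((mf i).integrable one_le_two),
      ED i, Ef i, zero_add]
  have E_tt : ∀ i j : Fin n,
      ∫ o, (S.Dfun i o + S.ffun i o) * (S.Dfun j o + S.ffun j o) ∂S.P
        = if i = j then (∫ o, S.hSfun i o ∂S.P) + q else τ * τ := by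
    have key : ∀ i j : Fin n,
        ∫ o, (S.Dfun i o + S.ffun i o) * (S.Dfun j o + S.ffun j o) ∂S.P
          = (∫ o, S.Dfun i o * S.Dfun j o ∂S.P) + ((∫ o, S.Dfun i o * S.ffun j o ∂S.P)
            + ((∫ o, S.ffun i o * S.Dfun j o ∂S.P) + ∫ o, S.ffun i o * S.ffun j o ∂S.P)) := by
      intro i j
      have he : (fun o => (S.Dfun i o + S.ffun i o) * (S.Dfun j o + S.ffun j o))
          = fun o => S.Dfun i o * S.Dfun j o + (S.Dfun i o * S.ffun j o
            + (S.ffun i o * S.Dfun j o + S.ffun i o * S.ffun j o)) := by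
        funext o
        ring
      have hI1 : Integrable (fun o => S.Dfun i o * S.ffun j o
          + (S.ffun i o * S.Dfun j o + S.ffun i o * S.ffun j o)) S.P :=
        (hprod _ _ (mD i) (mf j)).add ((hprod _ _ (mf i) (mD j)).add
          (hprod _ _ (mf i) (mf j)))
      have hI2 : Integrable (fun o => S.ffun i o * S.Dfun j o + S.ffun i o * S.ffun j o) S.P :=
        (hprod _ _ (mf i) (mD j)).add (hprod _ _ (mf i) (mf j))
      rw [he, integral_add (hprod _ _ (mD i) (mD j)) hI1,
        integral_add (hprod _ _ (mD i) (mf j)) hI2,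
        integral_add (hprod _ _ (mf i) (mD j)) (hprod _ _ (mf i) (mf j))]
    intro i j
    rcases eq_or_ne i j with rfl | hne
    · rw [if_pos rfl, key, EDsq i, EDf_same i, EfD_same i, Ef2 i]
      ring
    · rw [if_neg hne]
      rcases Fin.lt_or_lt_of_ne hne with hij | hij
      · rw [key, EDD i j hij, EDf i j hij, EfD i j hij, Eff i j hij]
        ring
      · rw [key, show ∫ o, S.Dfun i o * S.Dfun j o ∂S.P = 0 from by
          rw [show (fun o => S.Dfun i o * S.Dfun j o) = fun o => S.Dfun j o * S.Dfun i o
            from funext fun o => mul_comm _ _]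
          exact EDD j i hij,
          show ∫ o, S.Dfun i o * S.ffun j o ∂S.P = 0 from by
          rw [show (fun o => S.Dfun i o * S.ffun j o) = fun o => S.ffun j o * S.Dfun i o
            from funext fun o => mul_comm _ _]
          exact EfD j i hij,
          show ∫ o, S.ffun i o * S.Dfun j o ∂S.P = 0 from by
          rw [show (fun o => S.ffun i o * S.Dfun j o) = fun o => S.Dfun j o * S.ffun i o
            from funext fun o => mul_comm _ _]
          exact EDf j i hij,
          show ∫ o, S.ffun i o * S.ffun j o ∂S.P = τ * τ from by
          rw [show (fun o => S.ffun i o * S.ffun j o) = fun o => S.ffun j o * S.ffun i o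
            from funext fun o => mul_comm _ _]
          exact Eff j i hij]
        ring
  -- integrability of t i
  have mt : ∀ i : Fin n, MemLp (fun o => S.Dfun i o + S.ffun i o) 2 S.P := by
    intro i
    have h := (mD i).add (mf i)
    exact h
  -- expectation of T
  have ET : ∫ o, T o ∂S.P = τ := by
    rw [hT]
    rw [integral_const_mul]
    rw [integral_finset_sum Finset.univ
      (fun i _ => ((mt i).integrable one_le_two))]
    simp only [E_t]
    rw [Finset.sum_const, Finset.card_univ, Fintype.card_fin, nsmul_eq_mul]
    field_simp
  -- second moment of T
  have ET2 : ∫ o, T o ^ 2 ∂S.P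
      = (1 / (n : ℝ)) ^ 2 * ((∑ i : Fin n, ∫ o, S.hSfun i o ∂S.P)
        + (n : ℝ) * q + ((n : ℝ) * ((n : ℝ) - 1)) * (τ * τ)) := by
    rw [hT]
    have he : (fun o => ((1 / (n : ℝ)) * ∑ i : Fin n, (S.Dfun i o + S.ffun i o)) ^ 2)
        = fun o => (1 / (n : ℝ)) ^ 2 * ∑ i : Fin n, ∑ j : Fin n,
          (S.Dfun i o + S.ffun i o) * (S.Dfun j o + S.ffun j o) := by
      funext o
      rw [mul_pow, pow_two (∑ i : Fin n, (S.Dfun i o + S.ffun i o)), Finset.sum_mul_sum]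
    rw [he]
    rw [integral_const_mul]
    rw [integral_finset_sum Finset.univ (fun i _ => integrable_finset_sum Finset.univ
      (fun j _ => hprod _ _ (mt i) (mt j)))]
    have hsum : ∀ i : Fin n, ∑ j : Fin n,
        ∫ o, (S.Dfun i o + S.ffun i o) * (S.Dfun j o + S.ffun j o) ∂S.P
        = ((∫ o, S.hSfun i o ∂S.P) + q) + ((n : ℝ) - 1) * (τ * τ) := by
      intro i
      rw [← Finset.add_sum_erase Finset.univ (fun j =>
        ∫ o, (S.Dfun i o + S.ffun i o) * (S.Dfun j o + S.ffun j o) ∂S.P)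
        (Finset.mem_univ i)]
      simp only [E_tt, eq_self_iff_true, if_true]
      have herase : ∑ j ∈ Finset.univ.erase i,
          (if i = j then (∫ o, S.hSfun i o ∂S.P) + q else τ * τ)
          = ((n : ℝ) - 1) * (τ * τ) := by
        have hc : ∀ j ∈ Finset.univ.erase i,
            (if i = j then (∫ o, S.hSfun i o ∂S.P) + q else τ * τ) = τ * τ := fun j hj =>
          if_neg (Finset.ne_of_mem_erase hj).symm
        rw [Finset.sum_congr rfl hc, Finset.sum_const, Finset.card_erase_of_mem
          (Finset.mem_univ i), Finset.card_univ, Fintype.card_fin, nsmul_eq_mul]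
        rw [Nat.cast_sub hn]
        norm_num
      rw [herase]
    have hintsum : ∀ i, ∫ o, ∑ j : Fin n,
        (S.Dfun i o + S.ffun i o) * (S.Dfun j o + S.ffun j o) ∂S.P = ∑ j : Fin n,
        ∫ o, (S.Dfun i o + S.ffun i o) * (S.Dfun j o + S.ffun j o) ∂S.P := fun i =>
      integral_finset_sum Finset.univ (fun j _ => hprod _ _ (mt i) (mt j))
    simp only [hintsum, hsum]
    rw [Finset.sum_add_distrib, Finset.sum_add_distrib]
    simp only [Finset.sum_const, Finset.card_univ, Fintype.card_fin, nsmul_eq_mul]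
    ring
  -- conclusion
  rw [variance_eq_sub hT_L2, variance_eq_sub hfb_L2]
  have hTP2 : ∫ o, (T ^ 2) o ∂S.P = ∫ o, T o ^ 2 ∂S.P := by
    apply integral_congr_ae
    exact Filter.Eventually.of_forall fun o => by simp [pow_two]
  have hfP2 : ∫ x, (S.fbar ^ 2) x ∂S.XiM = q := by
    rw [hq]
    apply integral_congr_ae
    exact Filter.Eventually.of_forall fun x => by simp [pow_two]
  rw [hTP2, hfP2, ET2, ET, ← hτ]
  field_simp
  ring

end Main

end Setup
end OracleVar


/-- the oracle estimator attains the optimal variance v*². -/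
theorem oracle_estimator_variance
    {X A : Type*} [MeasurableSpace X] [MeasurableSpace A]
    (lamX : Measure X) (lamA : Measure A) (lamY : Measure ℝ)
    [SigmaFinite lamX] [SigmaFinite lamA] [SigmaFinite lamY]
    (n : ℕ) (hn : 0 < n)
    -- context density
    (xi : X → ℝ) (hxi_meas : Measurable xi) (hxi_nonneg : ∀ x, 0 ≤ xi x)
    (hxi_norm : ∫ x, xi x ∂lamX = 1)
    -- behavioral policy densities (history-dependent)
    (pi : Fin n → X → (Fin n → X × A × ℝ) → A → ℝ)
    (hpi_meas : ∀ i, Measurable fun p : X × (Fin n → X × A × ℝ) × A => pi i p.1 p.2.1 p.2.2)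
    (hpi_pos : ∀ i x o a, 0 < pi i x o a)
    (hpi_hist : ∀ (i : Fin n) x o o' a, (∀ j : Fin n, (j : ℕ) < (i : ℕ) → o j = o' j) →
      pi i x o a = pi i x o' a)
    (hpi_norm : ∀ i x o, ∫ a, pi i x o a ∂lamA = 1)
    -- outcome kernel density
    (gam : X → A → ℝ → ℝ)
    (hgam_meas : Measurable fun p : (X × A) × ℝ => gam p.1.1 p.1.2 p.2)
    (hgam_nonneg : ∀ x a y, 0 ≤ gam x a y)
    (hgam_norm : ∀ x a, ∫ y, gam x a y ∂lamY = 1)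
    -- evaluation function
    (g : X → A → ℝ) (hg_meas : Measurable fun p : X × A => g p.1 p.2)
    -- trajectory law of O_n
    (P : Measure (Fin n → X × A × ℝ))
    (hP : P = (Measure.pi fun _ : Fin n => lamX.prod (lamA.prod lamY)).withDensity
      fun o => ENNReal.ofReal (∏ i : Fin n,
        xi (o i).1 * pi i (o i).1 o (o i).2.1 * gam (o i).1 (o i).2.1 (o i).2.2))
    -- context distribution
    (Xi : Measure X) (hXi : Xi = lamX.withDensity fun x => ENNReal.ofReal (xi x))
    -- treatment effect
    (mustar : X → A → ℝ) (hmu : ∀ x a, mustar x a = ∫ y, y * gam x a y ∂lamY)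
    -- conditional variance function
    (sig2 : X → A → ℝ)
    (hsig2 : ∀ x a, sig2 x a = ∫ y, (y - mustar x a) ^ 2 * gam x a y ∂lamY)
    -- off-policy value
    (tau : ℝ) (htau : tau = ∫ x, ∫ a, g x a * mustar x a ∂lamA ∂Xi)
    (htau_int : Integrable (fun x => ∫ a, g x a * mustar x a ∂lamA) Xi)
    -- the oracle estimator
    (T : (Fin n → X × A × ℝ) → ℝ)
    (hT : T = fun o => (1 / (n : ℝ)) * ∑ i : Fin n,
      (g (o i).1 (o i).2.1 * ((o i).2.2 - mustar (o i).1 (o i).2.1)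
          / pi i (o i).1 o (o i).2.1
        + ∫ a, g (o i).1 a * mustar (o i).1 a ∂lamA))
    -- the weighted norm ‖σ‖_(n)²
    (S2 : ℝ) (hS2 : S2 = (1 / (n : ℝ)) * ∑ i : Fin n,
      ∫ o, (g (o i).1 (o i).2.1) ^ 2 * sig2 (o i).1 (o i).2.1
        / (pi i (o i).1 o (o i).2.1) ^ 2 ∂P)
    -- finiteness of all expectations appearing in the statement
    (hT_L2 : MemLp T 2 P)
    (hgmu_L2 : MemLp (fun x => ∫ a, g x a * mustar x a ∂lamA) 2 Xi)
    (hipw_L2 : ∀ i, Integrable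
      (fun o => (g (o i).1 (o i).2.1 * (o i).2.2 / pi i (o i).1 o (o i).2.1) ^ 2) P)
    (hS2_int : ∀ i, Integrable (fun o => (g (o i).1 (o i).2.1) ^ 2 * sig2 (o i).1 (o i).2.1
      / (pi i (o i).1 o (o i).2.1) ^ 2) P) :
    (n : ℝ) * variance T P
      = variance (fun x => ∫ a, g x a * mustar x a ∂lamA) Xi + S2 := by
  haveI hXne : Nonempty X := by
    by_contra h
    rw [not_nonempty_iff] at h
    rw [integral_of_isEmpty] at hxi_norm
    exact absurd hxi_norm (by norm_num)
  rcases isEmpty_or_nonempty A with hA | hA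
  · -- degenerate case: no actions, everything vanishes
    haveI hOm : IsEmpty (Fin n → X × A × ℝ) :=
      ⟨fun o => hA.false (o ⟨0, hn⟩).2.1⟩
    have hP0 : P = 0 := Measure.eq_zero_of_isEmpty P
    have hlamA0 : lamA = 0 := Measure.eq_zero_of_isEmpty lamA
    have hf0 : (fun x => ∫ a, g x a * mustar x a ∂lamA) = fun _ => (0 : ℝ) := by
      funext x
      rw [hlamA0]
      exact integral_zero_measure _
    have h1 : variance T P = 0 := by
      rw [hP0]
      simp [ProbabilityTheory.variance, ProbabilityTheory.evariance]
    have h2 : S2 = 0 := by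
      rw [hS2, hP0]
      simp
    have h3 : variance (fun x => ∫ a, g x a * mustar x a ∂lamA) Xi = 0 := by
      rw [hf0]
      simp [ProbabilityTheory.variance, ProbabilityTheory.evariance]
    rw [h1, h2, h3]
    ring
  · -- main case
    set S : OracleVar.Setup X A n :=
      { lamX := lamX, lamA := lamA, lamY := lamY,
        sfX := inferInstance, sfA := inferInstance, sfY := inferInstance,
        xi := xi, hxi_meas := hxi_meas, hxi_nonneg := hxi_nonneg, hxi_norm := hxi_norm,
        pi := pi, hpi_meas := hpi_meas, hpi_pos := hpi_pos, hpi_hist := hpi_hist,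
        hpi_norm := hpi_norm,
        gam := gam, hgam_meas := hgam_meas, hgam_nonneg := hgam_nonneg,
        hgam_norm := hgam_norm,
        g := g, hg_meas := hg_meas,
        mustar := mustar, hmu := hmu, sig2 := sig2, hsig2 := hsig2 } with hSdef
    have hPeq : P = S.P := by
      rw [hP]
      show _ = (Measure.pi fun _ : Fin n => S.nu).withDensity (S.W Finset.univ)
      have hnu : (fun _ : Fin n => lamX.prod (lamA.prod lamY)) = fun _ : Fin n => S.nu := rfl
      rw [hnu]
      congr 1
      funext o
      rw [ENNReal.ofReal_prod_of_nonneg (fun i _ => mul_nonneg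
        (mul_nonneg (hxi_nonneg _) (hpi_pos i _ _ _).le) (hgam_nonneg _ _ _))]
      apply Finset.prod_congr rfl
      intro j _
      congr 1
      show xi (o j).1 * pi j (o j).1 o (o j).2.1 * gam (o j).1 (o j).2.1 (o j).2.2 = S.d j o
      show _ = xi (o j).1 * (pi j (o j).1 o (o j).2.1 * gam (o j).1 (o j).2.1 (o j).2.2)
      rw [mul_assoc]
    have hXieq : Xi = S.XiM := hXi
    have hfb_L2 : MemLp S.fbar 2 S.XiM := by
      rw [← hXieq]
      exact hgmu_L2
    have hipw' : ∀ i : Fin n, Integrable (fun o => (S.ipw i o) ^ 2) S.P := by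
      intro i
      rw [← hPeq]
      exact hipw_L2 i
    have hS2i' : ∀ i : Fin n, Integrable (S.hSfun i) S.P := by
      intro i
      rw [← hPeq]
      exact hS2_int i
    have hT_L2' : MemLp T 2 S.P := by
      rw [← hPeq]
      exact hT_L2
    have hT' : T = fun o => (1 / (n : ℝ)) * ∑ i : Fin n, (S.Dfun i o + S.ffun i o) := hT
    have hmain := S.variance_formula hn hfb_L2 hipw' hS2i' T hT' hT_L2'
    rw [hPeq, hXieq]
    show (n : ℝ) * variance T S.P = variance S.fbar S.XiM + S2
    rw [hmain, hS2, hPeq]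
    rfl
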